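/- arXiv:2109.09931 — 4 statements merged into one kernel-verified Lean document; each statement's English description precedes it below -/
import Mathlib

section
/- For every n ≥ 4, every M_1^{(2)}-saturated 2-uniform convex geometric hypergraph on Ω_n has exactly n edges; in particular sat_○(n, M_1^{(2)}) = n. -/
set_option linter.all false
open Finset

/-- An abstract convex geometric hypergraph: `m` vertices on a circle, with the
cyclic ordering `0 < 1 < ⋯ < m-1 < 0`, together with a family of edges. -/
structure CGH where
  m : ℕ
  edges : Finset (Finset (Fin m))

/-- A list of points of `Fin n` is in (strict) cyclic order if some rotation of it
is strictly increasing in the linear order of `Fin n`. -/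
def CyclicSorted {n : ℕ} (l : List (Fin n)) : Prop :=
  ∃ k : ℕ, (l.rotate k).Chain' (· < ·)

/-- `H` contains a subhypergraph isomorphic to the convex geometric hypergraph `F`:
there is an injection of the vertices of `F` into `Fin n` respecting the cyclic
orderings and sending every edge of `F` to an edge of `H`. -/
def HasCopy (F : CGH) {n : ℕ} (H : Finset (Finset (Fin n))) : Prop :=
  ∃ f : Fin F.m → Fin n, Function.Injective f ∧ CyclicSorted (List.ofFn f) ∧
    ∀ e ∈ F.edges, e.image f ∈ H

/-- `H` is an `F`-saturated `r`-uniform convex geometric hypergraph on `Fin n`. -/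
def IsSat (F : CGH) (r : ℕ) {n : ℕ} (H : Finset (Finset (Fin n))) : Prop :=
  (∀ h ∈ H, h.card = r) ∧ ¬ HasCopy F H ∧
    ∀ e : Finset (Fin n), e.card = r → e ∉ H → HasCopy F (insert e H)

/-- The saturation number `sat_○(n, F)` for `r`-uniform cgh's on `Fin n`. -/
noncomputable def satNum (F : CGH) (r n : ℕ) : ℕ :=
  sInf {k | ∃ H : Finset (Finset (Fin n)), IsSat F r H ∧ H.card = k}

/-- `M_1^{(r)}`: two geometrically disjoint `r`-tuples. -/
def M1r (r : ℕ) : CGH where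
  m := 2 * r
  edges := {Finset.univ.filter (fun i : Fin (2 * r) => (i : ℕ) < r),
            Finset.univ.filter (fun i : Fin (2 * r) => r ≤ (i : ℕ))}

def M1cgh : CGH := ⟨6, {({0, 1, 2} : Finset (Fin 6)), ({3, 4, 5} : Finset (Fin 6))}⟩
def M2cgh : CGH := ⟨6, {({0, 1, 3} : Finset (Fin 6)), ({2, 4, 5} : Finset (Fin 6))}⟩
def M3cgh : CGH := ⟨6, {({0, 2, 4} : Finset (Fin 6)), ({1, 3, 5} : Finset (Fin 6))}⟩
def S1cgh : CGH := ⟨5, {({0, 1, 4} : Finset (Fin 5)), ({0, 2, 3} : Finset (Fin 5))}⟩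
def S2cgh : CGH := ⟨5, {({0, 1, 2} : Finset (Fin 5)), ({0, 3, 4} : Finset (Fin 5))}⟩
def S3cgh : CGH := ⟨5, {({0, 1, 3} : Finset (Fin 5)), ({0, 2, 4} : Finset (Fin 5))}⟩
def D1cgh : CGH := ⟨4, {({0, 1, 2} : Finset (Fin 4)), ({0, 2, 3} : Finset (Fin 4))}⟩
def D2cgh : CGH := ⟨4, {({0, 1, 2} : Finset (Fin 4)), ({0, 1, 3} : Finset (Fin 4))}⟩

/-- The closed clockwise arc `[a, b]` in `Fin n`. -/
def arcCC {n : ℕ} (a b : Fin n) : Finset (Fin n) :=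
  if a ≤ b then Finset.univ.filter (fun x => a ≤ x ∧ x ≤ b)
  else Finset.univ.filter (fun x => a ≤ x ∨ x ≤ b)

/-- The open clockwise arc `(a, b)` in `Fin n`. -/
def arcOO {n : ℕ} (a b : Fin n) : Finset (Fin n) :=
  if a < b then Finset.univ.filter (fun x => a < x ∧ x < b)
  else Finset.univ.filter (fun x => a < x ∨ x < b)

/-- The tuple `(w_1, …, w_{2ℓ+1})` (`0`-indexed here) consists of distinct points with
`w_1 < w_3 < ⋯ < w_{2ℓ+1} < w_2 < w_4 < ⋯ < w_{2ℓ} < w_1` in the cyclic order. -/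
def SemiValid {n : ℕ} (ℓ : ℕ) (w : Fin (2 * ℓ + 1) → Fin n) : Prop :=
  Function.Injective w ∧
    CyclicSorted (List.ofFn fun p : Fin (2 * ℓ + 1) =>
      w ⟨(2 * (p : ℕ)) % (2 * ℓ + 1), Nat.mod_lt _ (by omega)⟩)

/-- A semi-valid tuple is `r`-valid if moreover `|[w_i, w_{i-1}]| ≥ r` for all `i`. -/
def RValid {n : ℕ} (r ℓ : ℕ) (w : Fin (2 * ℓ + 1) → Fin n) : Prop :=
  SemiValid ℓ w ∧ ∀ i : Fin (2 * ℓ + 1), r ≤ (arcCC (w i) (w (i - 1))).card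

/-- `H_n^{(r)}(C)`: all `r`-sets meeting every interval `[w_i, w_{i-1}]`. -/
def HnC {n : ℕ} (r ℓ : ℕ) (w : Fin (2 * ℓ + 1) → Fin n) : Finset (Finset (Fin n)) :=
  (Finset.powersetCard r Finset.univ).filter fun e =>
    ∀ i : Fin (2 * ℓ + 1), (e ∩ arcCC (w i) (w (i - 1))).Nonempty

/-- `j` is the vertex `λ(v)` for `v` in `H`. -/
def IsLam {n : ℕ} [NeZero n] (H : Finset (Finset (Fin n))) (v j : Fin n) : Prop :=
  (∃ h ∈ H, v ∈ h ∧ h ⊆ arcCC j v) ∧ ¬ ∃ h ∈ H, v ∈ h ∧ h ⊆ arcCC (j + 1) v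

/-- `j` is the vertex `ρ(v)` for `v` in `H`. -/
def IsRho {n : ℕ} [NeZero n] (H : Finset (Finset (Fin n))) (v j : Fin n) : Prop :=
  (∃ h ∈ H, v ∈ h ∧ h ⊆ arcCC v j) ∧ ¬ ∃ h ∈ H, v ∈ h ∧ h ⊆ arcCC v (j - 1)

noncomputable def lamF {n : ℕ} [NeZero n] (H : Finset (Finset (Fin n))) (v : Fin n) : Fin n :=
  letI := Classical.propDecidable (∃ j, IsLam H v j)
  if h : ∃ j, IsLam H v j then h.choose else v

noncomputable def rhoF {n : ℕ} [NeZero n] (H : Finset (Finset (Fin n))) (v : Fin n) : Fin n :=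
  letI := Classical.propDecidable (∃ j, IsRho H v j)
  if h : ∃ j, IsRho H v j then h.choose else v

/-- Strict cyclic betweenness on `Fin n`. -/
def CyclicSbtw {n : ℕ} (a b c : Fin n) : Prop :=
  (a < b ∧ b < c) ∨ (b < c ∧ c < a) ∨ (c < a ∧ a < b)

/-- Isomorphism of two cgh's on `Fin n`: a bijection of the vertex set respecting the
cyclic order and inducing a bijection of the edge sets. -/
def CGHIso {n : ℕ} (H H' : Finset (Finset (Fin n))) : Prop :=
  ∃ g : Fin n ≃ Fin n,
    (∀ a b c : Fin n, CyclicSbtw a b c → CyclicSbtw (g a) (g b) (g c)) ∧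
    ∀ e : Finset (Fin n), e ∈ H ↔ e.image g ∈ H'

/-- The 3-cgh `H_n^{(3)}`: all triples containing `v_0`, together with all triples
containing one of the pairs `{v_1, v_{n-2}}`, `{v_1, v_{n-1}}`, `{v_2, v_{n-1}}`. -/
def Hn3 (n : ℕ) (hn : 6 ≤ n) : Finset (Finset (Fin n)) :=
  (Finset.powersetCard 3 Finset.univ).filter fun e =>
    (⟨0, by omega⟩ : Fin n) ∈ e ∨
    ((⟨1, by omega⟩ : Fin n) ∈ e ∧ (⟨n - 2, by omega⟩ : Fin n) ∈ e) ∨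
    ((⟨1, by omega⟩ : Fin n) ∈ e ∧ (⟨n - 1, by omega⟩ : Fin n) ∈ e) ∨
    ((⟨2, by omega⟩ : Fin n) ∈ e ∧ (⟨n - 1, by omega⟩ : Fin n) ∈ e)

/-- Saturation with respect to a family of cgh's. -/
def FamSat (ℱ : Set CGH) (r : ℕ) {n : ℕ} (H : Finset (Finset (Fin n))) : Prop :=
  (∀ h ∈ H, h.card = r) ∧ (∀ F ∈ ℱ, ¬ HasCopy F H) ∧
    ∀ e : Finset (Fin n), e.card = r → e ∉ H → ∃ F ∈ ℱ, HasCopy F (insert e H)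

noncomputable def famSatNum (ℱ : Set CGH) (r n : ℕ) : ℕ :=
  sInf {k | ∃ H : Finset (Finset (Fin n)), FamSat ℱ r H ∧ H.card = k}

/-- Rotation of a point of `Fin n` by an integer amount `m`. -/
def finShift {n : ℕ} (hn : 0 < n) (v : Fin n) (m : ℤ) : Fin n :=
  ⟨(((v : ℤ) + m) % (n : ℤ)).toNat, by
    have h0 : (0 : ℤ) < (n : ℤ) := by exact_mod_cast hn
    have h1 := Int.emod_nonneg ((v : ℤ) + m) (by omega : (n : ℤ) ≠ 0)
    have h2 := Int.emod_lt_of_pos ((v : ℤ) + m) h0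
    omega⟩

/-- The tuple `w` is `(i,k)`-consecutive: starting from position `i`, the entries at
positions `i, i+2, …, i+2(k-1)` are `k` consecutive points `v_j, v_{j+1}, …, v_{j+k-1}`. -/
def ConsecAt {n ℓ : ℕ} (hn : 0 < n) (w : Fin (2 * ℓ + 1) → Fin n)
    (i : Fin (2 * ℓ + 1)) (k : ℕ) : Prop :=
  ∃ j : Fin n, ∀ s : ℕ, s < k →
    w (i + ⟨(2 * s) % (2 * ℓ + 1), Nat.mod_lt _ (by omega)⟩) = finShift hn j s

/-- The tuple `C_{i,k,m}`: the `k` consecutive points at positions `i, i+2, …, i+2(k-1)`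
are rotated by `m` units; all other entries are unchanged. -/
def shiftTuple {n ℓ : ℕ} (hn : 0 < n) (w : Fin (2 * ℓ + 1) → Fin n)
    (i : Fin (2 * ℓ + 1)) (k : ℕ) (m : ℤ) : Fin (2 * ℓ + 1) → Fin n :=
  fun p => if (p - i).val % 2 = 0 ∧ (p - i).val / 2 < k then finShift hn (w p) m else w p

section MyAux

open Finset

def Cb3 (u v w : ℕ) : Prop := (u < v ∧ v < w) ∨ (v < w ∧ w < u) ∨ (w < u ∧ u < v)

def CChain4 (v1 v2 v3 v4 : ℕ) : Prop :=
  (v1 < v2 ∧ v2 < v3 ∧ v3 < v4) ∨ (v2 < v3 ∧ v3 < v4 ∧ v4 < v1) ∨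
  (v3 < v4 ∧ v4 < v1 ∧ v1 < v2) ∨ (v4 < v1 ∧ v1 < v2 ∧ v2 < v3)

lemma my_mod3 (n x : ℕ) (hn : 0 < n) (hx : x < 3*n) :
    x % n < n ∧ (x % n = x ∨ x % n + n = x ∨ x % n + 2*n = x) := by
  have h1 := Nat.div_add_mod x n
  have h2 : x / n < 3 := Nat.div_lt_of_lt_mul (by omega)
  have hm := Nat.mod_lt x hn
  set q := x / n with hq
  set r := x % n with hr
  interval_cases q <;> omega

lemma my_pair_eq {n : ℕ} {a b c d : Fin n} (hab : a ≠ b)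
    (h : ({a,b} : Finset (Fin n)) = {c,d}) :
    (a = c ∧ b = d) ∨ (a = d ∧ b = c) := by
  have ha : a ∈ ({c,d} : Finset (Fin n)) := h ▸ (mem_insert_self a {b})
  have hb : b ∈ ({c,d} : Finset (Fin n)) := h ▸ (mem_insert_of_mem (mem_singleton_self b))
  have hc : c ∈ ({a,b} : Finset (Fin n)) := h ▸ (mem_insert_self c {d})
  have hd : d ∈ ({a,b} : Finset (Fin n)) := h ▸ (mem_insert_of_mem (mem_singleton_self d))
  simp only [mem_insert, mem_singleton] at ha hb hc hd
  rcases ha with rfl|rfl <;> rcases hb with rfl|rfl <;> tauto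

lemma rotCb3 {n : ℕ} (hn : 0 < n) {c : ℕ} (hc : c ≤ n) {u v w : ℕ}
    (hu : u < n) (hv : v < n) (hw : w < n) :
    Cb3 u v w ↔ Cb3 ((u+c) % n) ((v+c) % n) ((w+c) % n) := by
  obtain ⟨h1, h2⟩ := my_mod3 n (u+c) hn (by omega)
  obtain ⟨h3, h4⟩ := my_mod3 n (v+c) hn (by omega)
  obtain ⟨h5, h6⟩ := my_mod3 n (w+c) hn (by omega)
  simp only [Cb3]
  omega

lemma cchain_iff (a b c d : ℕ) : CChain4 a b c d ↔ Cb3 a b c ∧ Cb3 b c d ∧ Cb3 c d a := by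
  simp only [CChain4, Cb3]; omega

lemma rotC4 {n : ℕ} (hn : 0 < n) {c : ℕ} (hc : c ≤ n) {v1 v2 v3 v4 : ℕ}
    (h1 : v1 < n) (h2 : v2 < n) (h3 : v3 < n) (h4 : v4 < n) :
    CChain4 v1 v2 v3 v4 ↔ CChain4 ((v1+c) % n) ((v2+c) % n) ((v3+c) % n) ((v4+c) % n) := by
  rw [cchain_iff, cchain_iff]
  rw [rotCb3 hn hc h1 h2 h3, rotCb3 hn hc h2 h3 h4, rotCb3 hn hc h3 h4 h1]


lemma chain_cases {L R u1 u2 v1 v2 : ℕ} (h1 : L ≤ u1) (h2 : u1 < u2) (h3 : u2 ≤ R)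
    (h4 : v1 < v2) (h5 : v1 < L ∨ R < v1) (h6 : v2 < L ∨ R < v2) :
    CChain4 u1 u2 v1 v2 ∨ CChain4 u1 u2 v2 v1 := by
  simp only [CChain4]; omega

lemma cb3_inside {L R v : ℕ} (h : Cb3 L v R) (hLR : L < R) : L < v ∧ v < R := by
  simp only [Cb3] at h; omega

lemma cb3_outside {L R v : ℕ} (h : Cb3 R v L) (hLR : L < R) : v < L ∨ R < v := by
  simp only [Cb3] at h; omega

lemma small_forced {a x y b : ℕ} (hx : a < x ∧ x < b) (hy : a < y ∧ y < b)
    (hab : b ≤ a + 2) : x = y := by omega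

lemma small_forced' {x y b n : ℕ} (hx : x < 0 ∨ b < x) (hy : y < 0 ∨ b < y)
    (hxn : x < n) (hyn : y < n) (hbn : n ≤ b + 2) : x = y := by omega

variable {n : ℕ} {H : Finset (Finset (Fin n))}

lemma copy_intro {x1 x2 x3 x4 : Fin n} (h12 : x1 < x2) (h23 : x2 < x3) (h34 : x3 < x4)
    (hA : ({x1,x2} : Finset (Fin n)) ∈ H) (hB : ({x3,x4} : Finset (Fin n)) ∈ H) :
    HasCopy (M1r 2) H := by
  have n12 := ne_of_lt h12
  have n13 := ne_of_lt (h12.trans h23)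
  have n14 := ne_of_lt ((h12.trans h23).trans h34)
  have n23 := ne_of_lt h23
  have n24 := ne_of_lt (h23.trans h34)
  have n34 := ne_of_lt h34
  refine ⟨fun i => if i.val = 0 then x1 else if i.val = 1 then x2 else if i.val = 2 then x3 else x4,
    ?_, ⟨0, ?_⟩, ?_⟩
  · intro i j hij
    have hi : i.val = 0 ∨ i.val = 1 ∨ i.val = 2 ∨ i.val = 3 := by
      have : (i:ℕ) < 4 := i.isLt; omega
    have hj : j.val = 0 ∨ j.val = 1 ∨ j.val = 2 ∨ j.val = 3 := by
      have : (j:ℕ) < 4 := j.isLt; omega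
    apply Fin.ext
    rcases hi with h|h|h|h <;> rcases hj with h'|h'|h'|h' <;> simp_all
  · rw [List.rotate_zero]
    show List.Chain' (· < ·) [x1, x2, x3, x4]
    simp only [List.Chain', List.isChain_cons_cons, List.isChain_singleton, and_true]
    exact ⟨h12, h23, h34⟩
  · intro e he
    simp only [M1r, Finset.mem_insert, Finset.mem_singleton] at he
    obtain rfl | rfl : e = _ ∨ e = _ := Or.imp_right Finset.mem_singleton.1 (Finset.mem_insert.1 he)
    · have h : (Finset.univ.filter (fun i : Fin (2*2) => (i : ℕ) < 2))
          = ({⟨0, by decide⟩, ⟨1, by decide⟩} : Finset (Fin (2*2))) := by decide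
      erw [h, Finset.image_insert, Finset.image_singleton]
      exact hA
    · have h : (Finset.univ.filter (fun i : Fin (2*2) => 2 ≤ (i : ℕ)))
          = ({⟨2, by decide⟩, ⟨3, by decide⟩} : Finset (Fin (2*2))) := by decide
      erw [h, Finset.image_insert, Finset.image_singleton]
      exact hB

lemma copy_intro2 {x1 x2 x3 x4 : Fin n} (h12 : x1 < x2) (h23 : x2 < x3) (h34 : x3 < x4)
    (hA : ({x1,x4} : Finset (Fin n)) ∈ H) (hB : ({x2,x3} : Finset (Fin n)) ∈ H) :
    HasCopy (M1r 2) H := by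
  have n12 := ne_of_lt h12
  have n13 := ne_of_lt (h12.trans h23)
  have n14 := ne_of_lt ((h12.trans h23).trans h34)
  have n23 := ne_of_lt h23
  have n24 := ne_of_lt (h23.trans h34)
  have n34 := ne_of_lt h34
  refine ⟨fun i => if i.val = 0 then x2 else if i.val = 1 then x3 else if i.val = 2 then x4 else x1,
    ?_, ⟨3, ?_⟩, ?_⟩
  · intro i j hij
    have hi : i.val = 0 ∨ i.val = 1 ∨ i.val = 2 ∨ i.val = 3 := by
      have : (i:ℕ) < 4 := i.isLt; omega
    have hj : j.val = 0 ∨ j.val = 1 ∨ j.val = 2 ∨ j.val = 3 := by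
      have : (j:ℕ) < 4 := j.isLt; omega
    apply Fin.ext
    rcases hi with h|h|h|h <;> rcases hj with h'|h'|h'|h' <;> simp_all
  · show List.Chain' (· < ·) ([x2, x3, x4, x1].rotate 3)
    have h : [x2, x3, x4, x1].rotate 3 = [x1, x2, x3, x4] := rfl
    rw [h]
    simp only [List.Chain', List.isChain_cons_cons, List.isChain_singleton, and_true]
    exact ⟨h12, h23, h34⟩
  · intro e he
    simp only [M1r, Finset.mem_insert, Finset.mem_singleton] at he
    obtain rfl | rfl : e = _ ∨ e = _ := Or.imp_right Finset.mem_singleton.1 (Finset.mem_insert.1 he)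
    · have h : (Finset.univ.filter (fun i : Fin (2*2) => (i : ℕ) < 2))
          = ({⟨0, by decide⟩, ⟨1, by decide⟩} : Finset (Fin (2*2))) := by decide
      erw [h, Finset.image_insert, Finset.image_singleton]
      exact hB
    · have h : (Finset.univ.filter (fun i : Fin (2*2) => 2 ≤ (i : ℕ)))
          = ({⟨2, by decide⟩, ⟨3, by decide⟩} : Finset (Fin (2*2))) := by decide
      erw [h, Finset.image_insert, Finset.image_singleton]
      show ({x4, x1} : Finset (Fin n)) ∈ H
      rwa [Finset.pair_comm]

lemma copy_elim (h : HasCopy (M1r 2) H) :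
    ∃ x1 x2 x3 x4 : Fin n, x1 < x2 ∧ x2 < x3 ∧ x3 < x4 ∧
      ((({x1,x2} : Finset (Fin n)) ∈ H ∧ ({x3,x4} : Finset (Fin n)) ∈ H) ∨
       (({x1,x4} : Finset (Fin n)) ∈ H ∧ ({x2,x3} : Finset (Fin n)) ∈ H)) := by
  obtain ⟨f, -, ⟨k, hchain⟩, hedge⟩ := h
  have hE1 : ({f ⟨0, by decide⟩, f ⟨1, by decide⟩} : Finset (Fin n)) ∈ H := by
    have h1 := hedge (Finset.univ.filter (fun i : Fin (2*2) => (i : ℕ) < 2)) (Finset.mem_insert_self _ _)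
    have h : (Finset.univ.filter (fun i : Fin (2*2) => (i : ℕ) < 2))
        = ({⟨0, by decide⟩, ⟨1, by decide⟩} : Finset (Fin (2*2))) := by decide
    erw [h, Finset.image_insert, Finset.image_singleton] at h1
    exact h1
  have hE2 : ({f ⟨2, by decide⟩, f ⟨3, by decide⟩} : Finset (Fin n)) ∈ H := by
    have h1 := hedge (Finset.univ.filter (fun i : Fin (2*2) => 2 ≤ (i : ℕ))) (Finset.mem_insert_of_mem (Finset.mem_singleton_self _))
    have h : (Finset.univ.filter (fun i : Fin (2*2) => 2 ≤ (i : ℕ)))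
        = ({⟨2, by decide⟩, ⟨3, by decide⟩} : Finset (Fin (2*2))) := by decide
    erw [h, Finset.image_insert, Finset.image_singleton] at h1
    exact h1
  set a := f ⟨0, by decide⟩ with ha
  set b := f ⟨1, by decide⟩ with hb
  set c := f ⟨2, by decide⟩ with hc
  set d := f ⟨3, by decide⟩ with hd
  have hlist : List.ofFn f = [a, b, c, d] := rfl
  rw [hlist, ← List.rotate_mod] at hchain
  have hk : k % 4 = k % [a,b,c,d].length := by norm_num
  have h4 : k % 4 = 0 ∨ k % 4 = 1 ∨ k % 4 = 2 ∨ k % 4 = 3 := by omega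
  rcases h4 with h|h|h|h <;> rw [← hk, h] at hchain
  · have he : [a,b,c,d].rotate 0 = [a,b,c,d] := rfl
    rw [he] at hchain
    simp only [List.Chain', List.isChain_cons_cons, List.isChain_singleton, and_true] at hchain
    exact ⟨a, b, c, d, hchain.1, hchain.2.1, hchain.2.2, Or.inl ⟨hE1, hE2⟩⟩
  · have he : [a,b,c,d].rotate 1 = [b,c,d,a] := rfl
    rw [he] at hchain
    simp only [List.Chain', List.isChain_cons_cons, List.isChain_singleton, and_true] at hchain
    exact ⟨b, c, d, a, hchain.1, hchain.2.1, hchain.2.2,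
      Or.inr ⟨Finset.pair_comm a b ▸ hE1, hE2⟩⟩
  · have he : [a,b,c,d].rotate 2 = [c,d,a,b] := rfl
    rw [he] at hchain
    simp only [List.Chain', List.isChain_cons_cons, List.isChain_singleton, and_true] at hchain
    exact ⟨c, d, a, b, hchain.1, hchain.2.1, hchain.2.2, Or.inl ⟨hE2, hE1⟩⟩
  · have he : [a,b,c,d].rotate 3 = [d,a,b,c] := rfl
    rw [he] at hchain
    simp only [List.Chain', List.isChain_cons_cons, List.isChain_singleton, and_true] at hchain
    exact ⟨d, a, b, c, hchain.1, hchain.2.1, hchain.2.2,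
      Or.inr ⟨Finset.pair_comm c d ▸ hE2, hE1⟩⟩

lemma copy_intro_cyc {y1 y2 y3 y4 : Fin n} (h4 : CChain4 y1.val y2.val y3.val y4.val)
    (h12 : ({y1,y2} : Finset (Fin n)) ∈ H) (h34 : ({y3,y4} : Finset (Fin n)) ∈ H) :
    HasCopy (M1r 2) H := by
  rcases h4 with ⟨ha,hb,hc⟩|⟨ha,hb,hc⟩|⟨ha,hb,hc⟩|⟨ha,hb,hc⟩
  · exact copy_intro (Fin.lt_def.mpr ha) (Fin.lt_def.mpr hb) (Fin.lt_def.mpr hc) h12 h34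
  · exact copy_intro2 (Fin.lt_def.mpr ha) (Fin.lt_def.mpr hb) (Fin.lt_def.mpr hc)
      (Finset.pair_comm y1 y2 ▸ h12) h34
  · exact copy_intro (Fin.lt_def.mpr ha) (Fin.lt_def.mpr hb) (Fin.lt_def.mpr hc) h34 h12
  · exact copy_intro2 (Fin.lt_def.mpr ha) (Fin.lt_def.mpr hb) (Fin.lt_def.mpr hc)
      (Finset.pair_comm y3 y4 ▸ h34) h12

lemma block (hfree : ¬ HasCopy (M1r 2) H)
    (hadd : ∀ e : Finset (Fin n), e.card = 2 → e ∉ H → HasCopy (M1r 2) (insert e H))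
    {a b : Fin n} (hab : a ≠ b) (hnin : ({a,b} : Finset (Fin n)) ∉ H) :
    ∃ c d : Fin n, ({c,d} : Finset (Fin n)) ∈ H ∧ c ≠ d ∧
      ((Cb3 a.val c.val b.val ∧ Cb3 a.val d.val b.val) ∨
       (Cb3 b.val c.val a.val ∧ Cb3 b.val d.val a.val)) := by
  obtain ⟨x1, x2, x3, x4, h12, h23, h34, hpat⟩ :=
    copy_elim (hadd _ (Finset.card_pair hab) hnin)
  have l12 : (x1:ℕ) < x2 := h12
  have l23 : (x2:ℕ) < x3 := h23
  have l34 : (x3:ℕ) < x4 := h34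
  rcases hpat with ⟨hE, hE'⟩ | ⟨hE, hE'⟩
  · rcases Finset.mem_insert.1 hE with h1 | h1 <;> rcases Finset.mem_insert.1 hE' with h2 | h2
    · exfalso
      have hx : x3 ∈ ({x1, x2} : Finset (Fin n)) := by rw [h1, ← h2]; simp
      simp only [Finset.mem_insert, Finset.mem_singleton] at hx
      rcases hx with h | h
      · have h' : (x3:ℕ) = x1 := congrArg Fin.val h; omega
      · have h' : (x3:ℕ) = x2 := congrArg Fin.val h; omega
    · rcases my_pair_eq (ne_of_lt h12) h1 with ⟨rfl, rfl⟩ | ⟨rfl, rfl⟩ <;>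
        exact ⟨x3, x4, h2, ne_of_lt h34, by simp only [Cb3]; omega⟩
    · rcases my_pair_eq (ne_of_lt h34) h2 with ⟨rfl, rfl⟩ | ⟨rfl, rfl⟩ <;>
        exact ⟨x1, x2, h1, ne_of_lt h12, by simp only [Cb3]; omega⟩
    · exact absurd (copy_intro h12 h23 h34 h1 h2) hfree
  · have hne14 : x1 ≠ x4 := ne_of_lt ((h12.trans h23).trans h34)
    rcases Finset.mem_insert.1 hE with h1 | h1 <;> rcases Finset.mem_insert.1 hE' with h2 | h2
    · exfalso
      have hx : x2 ∈ ({x1, x4} : Finset (Fin n)) := by rw [h1, ← h2]; simp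
      simp only [Finset.mem_insert, Finset.mem_singleton] at hx
      rcases hx with h | h
      · have h' : (x2:ℕ) = x1 := congrArg Fin.val h; omega
      · have h' : (x2:ℕ) = x4 := congrArg Fin.val h; omega
    · rcases my_pair_eq hne14 h1 with ⟨rfl, rfl⟩ | ⟨rfl, rfl⟩ <;>
        exact ⟨x2, x3, h2, ne_of_lt h23, by simp only [Cb3]; omega⟩
    · rcases my_pair_eq (ne_of_lt h23) h2 with ⟨rfl, rfl⟩ | ⟨rfl, rfl⟩ <;>
        exact ⟨x1, x4, h1, hne14, by simp only [Cb3]; omega⟩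
    · exact absurd (copy_intro2 h12 h23 h34 h1 h2) hfree

lemma inj_core (hfree : ¬ HasCopy (M1r 2) H) {a b c d : Fin n} (hab : a < b) (hcd : c < d)
    (h1 : ({a,b} : Finset (Fin n)) ∈ H) (h2 : ({c,d} : Finset (Fin n)) ∈ H)
    (hne : ({a,b} : Finset (Fin n)) ≠ {c,d})
    (hsum : ((a:ℕ) + b) % n = ((c:ℕ) + d) % n) : False := by
  have npos : 0 < n := a.pos
  have la : (a:ℕ) < n := a.isLt
  have lb : (b:ℕ) < n := b.isLt
  have lc : (c:ℕ) < n := c.isLt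
  have ld : (d:ℕ) < n := d.isLt
  have lab : (a:ℕ) < b := hab
  have lcd : (c:ℕ) < d := hcd
  obtain ⟨m1, d1⟩ := my_mod3 n ((a:ℕ)+b) npos (by omega)
  obtain ⟨m2, d2⟩ := my_mod3 n ((c:ℕ)+d) npos (by omega)
  have hac : (a:ℕ) ≠ c := by
    intro h
    have hbd : (b:ℕ) = d := by omega
    exact hne (by rw [Fin.val_injective h, Fin.val_injective hbd])
  have had : (a:ℕ) ≠ d := by
    intro h
    have hbc : (b:ℕ) = c := by omega
    exact hne (by rw [Fin.val_injective h, Fin.val_injective hbc, Finset.pair_comm])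
  have hbc : (b:ℕ) ≠ c := by
    intro h
    have had2 : (a:ℕ) = d := by omega
    exact hne (by rw [Fin.val_injective h, Fin.val_injective had2, Finset.pair_comm])
  have hbd : (b:ℕ) ≠ d := by
    intro h
    have hac2 : (a:ℕ) = c := by omega
    exact hne (by rw [Fin.val_injective h, Fin.val_injective hac2])
  rcases lt_or_gt_of_ne hac with h | h
  · rcases lt_or_gt_of_ne hbd with h' | h'
    · rcases lt_or_gt_of_ne hbc with h'' | h''
      · exact hfree (copy_intro hab (Fin.lt_def.mpr h'') hcd h1 h2)
      · omega
    · exact hfree (copy_intro2 (Fin.lt_def.mpr h) hcd (Fin.lt_def.mpr h') h1 h2)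
  · rcases lt_or_gt_of_ne hbd with h' | h'
    · exact hfree (copy_intro2 (Fin.lt_def.mpr h) hab (Fin.lt_def.mpr h') h2 h1)
    · rcases lt_or_gt_of_ne had with h'' | h''
      · omega
      · exact hfree (copy_intro hcd (Fin.lt_def.mpr h'') hab h2 h1)

end MyAux

set_option maxHeartbeats 1600000 in
lemma sur_lemma {n : ℕ} {H : Finset (Finset (Fin n))} (hn : 4 ≤ n)
    (hfree : ¬ HasCopy (M1r 2) H)
    (hadd : ∀ e : Finset (Fin n), e.card = 2 → e ∉ H → HasCopy (M1r 2) (insert e H)) :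
    ∀ t : ℕ, t < n → ∃ e ∈ H, (∑ x ∈ e, (x:ℕ)) % n = t := by
  have npos : 0 < n := by omega
  intro t ht
  by_contra hno
  push_neg at hno
  -- choice of parameters
  obtain ⟨δ, P, hδ, hP, hPt⟩ : ∃ δ P : ℕ, δ ≤ 1 ∧ P < n ∧ (2*P + 1 + δ) % n = t := by
    rcases Nat.mod_two_eq_zero_or_one t with h | h
    · refine ⟨1, (t/2 + n - 1) % n, le_refl 1, Nat.mod_lt _ npos, ?_⟩
      obtain ⟨l1, c1⟩ := my_mod3 n (t/2 + n - 1) npos (by omega)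
      obtain ⟨l2, c2⟩ := my_mod3 n (2*((t/2 + n - 1) % n) + 1 + 1) npos (by omega)
      omega
    · refine ⟨0, t/2, by omega, by omega, ?_⟩
      have he : 2*(t/2) + 1 + 0 = t := by omega
      rw [he, Nat.mod_eq_of_lt ht]
  obtain ⟨m, hm⟩ : ∃ m : ℕ, 2*m + δ + 2 = n ∨ 2*m + δ + 3 = n := ⟨(n - 2 - δ)/2, by omega⟩
  obtain ⟨bs, hbslt, hbsd⟩ : ∃ bs : ℕ, bs < n ∧ (bs = P + n - m ∨ bs + n = P + n - m) := by
    obtain ⟨l, c⟩ := my_mod3 n (P + n - m) npos (by omega)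
    exact ⟨(P + n - m) % n, l, by omega⟩
  set cs := n - bs with hcs
  have hcsle : cs ≤ n := by omega
  have hmn : m < n := by omega
  -- the key coordinate computation
  have homega : ∀ j ≤ m, ((P + n - j) % n + cs) % n = m - j ∧
      ((P + 1 + δ + j) % n + cs) % n = m + δ + j + 1 := by
    intro j hj
    obtain ⟨b1, b2⟩ := my_mod3 n (P + n - j) npos (by omega)
    obtain ⟨d1, d2⟩ := my_mod3 n (P + 1 + δ + j) npos (by omega)
    obtain ⟨e1, e2⟩ := my_mod3 n ((P + n - j) % n + cs) npos (by omega)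
    obtain ⟨f1, f2⟩ := my_mod3 n ((P + 1 + δ + j) % n + cs) npos (by omega)
    constructor <;> omega
  have hsumpq : ∀ j ≤ m, ((P + n - j) % n + (P + 1 + δ + j) % n) % n = t := by
    intro j hj
    obtain ⟨b1, b2⟩ := my_mod3 n (P + n - j) npos (by omega)
    obtain ⟨d1, d2⟩ := my_mod3 n (P + 1 + δ + j) npos (by omega)
    obtain ⟨g1, g2⟩ := my_mod3 n ((P + n - j) % n + (P + 1 + δ + j) % n) npos (by omega)
    obtain ⟨k1, k2⟩ := my_mod3 n (2*P + 1 + δ) npos (by omega)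
    omega
  have OINJ : ∀ x y : Fin n, ((x:ℕ) + cs) % n = ((y:ℕ) + cs) % n → x = y := by
    intro x y h
    obtain ⟨u1, u2⟩ := my_mod3 n ((x:ℕ) + cs) npos (by have := x.isLt; omega)
    obtain ⟨v1, v2⟩ := my_mod3 n ((y:ℕ) + cs) npos (by have := y.isLt; omega)
    have hx := x.isLt
    have hy := y.isLt
    exact Fin.val_injective (by omega)
  have docopy : ∀ w1 w2 w3 w4 : Fin n, ({w1,w2} : Finset (Fin n)) ∈ H →
      ({w3,w4} : Finset (Fin n)) ∈ H →
      CChain4 (((w1:ℕ)+cs) % n) (((w2:ℕ)+cs) % n) (((w3:ℕ)+cs) % n) (((w4:ℕ)+cs) % n) →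
      False := by
    intro w1 w2 w3 w4 hA hB hC
    exact hfree (copy_intro_cyc
      ((rotC4 npos hcsle w1.isLt w2.isLt w3.isLt w4.isLt).mpr hC) hA hB)
  -- blockers for each chord in the class
  have hblockj : ∀ j ≤ m, ∃ c d : Fin n, ({c,d} : Finset (Fin n)) ∈ H ∧ c ≠ d ∧
      (((m - j < ((c:ℕ)+cs) % n ∧ ((c:ℕ)+cs) % n < m + δ + j + 1) ∧
        (m - j < ((d:ℕ)+cs) % n ∧ ((d:ℕ)+cs) % n < m + δ + j + 1)) ∨
       ((((c:ℕ)+cs) % n < m - j ∨ m + δ + j + 1 < ((c:ℕ)+cs) % n) ∧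
        (((d:ℕ)+cs) % n < m - j ∨ m + δ + j + 1 < ((d:ℕ)+cs) % n))) := by
    intro j hj
    set p : Fin n := ⟨(P + n - j) % n, Nat.mod_lt _ npos⟩ with hp
    set q : Fin n := ⟨(P + 1 + δ + j) % n, Nat.mod_lt _ npos⟩ with hq
    have hpv : ((p:ℕ) + cs) % n = m - j := (homega j hj).1
    have hqv : ((q:ℕ) + cs) % n = m + δ + j + 1 := (homega j hj).2
    have hpq : p ≠ q := by
      intro h
      have := congrArg (fun x : Fin n => ((x:ℕ) + cs) % n) h
      simp only [hpv, hqv] at this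
      omega
    have hnotin : ({p, q} : Finset (Fin n)) ∉ H := by
      intro hmem
      exact hno _ hmem (by rw [Finset.sum_pair hpq]; exact hsumpq j hj)
    obtain ⟨c, d, hcdH, hcdne, hside⟩ := block hfree hadd hpq hnotin
    have hconv : ∀ x : Fin n, Cb3 (p:ℕ) (x:ℕ) (q:ℕ) →
        Cb3 (m - j) (((x:ℕ)+cs) % n) (m + δ + j + 1) := by
      intro x hx
      have := (rotCb3 npos hcsle p.isLt x.isLt q.isLt).mp hx
      rwa [hpv, hqv] at this
    have hconv' : ∀ x : Fin n, Cb3 (q:ℕ) (x:ℕ) (p:ℕ) →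
        Cb3 (m + δ + j + 1) (((x:ℕ)+cs) % n) (m - j) := by
      intro x hx
      have := (rotCb3 npos hcsle q.isLt x.isLt p.isLt).mp hx
      rwa [hpv, hqv] at this
    have hLR : m - j < m + δ + j + 1 := by omega
    rcases hside with ⟨hc, hd⟩ | ⟨hc, hd⟩
    · exact ⟨c, d, hcdH, hcdne,
        Or.inl ⟨cb3_inside (hconv c hc) hLR, cb3_inside (hconv d hd) hLR⟩⟩
    · exact ⟨c, d, hcdH, hcdne,
        Or.inr ⟨cb3_outside (hconv' c hc) hLR, cb3_outside (hconv' d hd) hLR⟩⟩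
  -- the predicate and extremal choice
  classical
  set Pred : ℕ → Prop := fun j => j ≤ m ∧ ∃ c d : Fin n,
      ({c,d} : Finset (Fin n)) ∈ H ∧ c ≠ d ∧
      (((c:ℕ)+cs) % n < m - j ∨ m + δ + j + 1 < ((c:ℕ)+cs) % n) ∧
      (((d:ℕ)+cs) % n < m - j ∨ m + δ + j + 1 < ((d:ℕ)+cs) % n) with hPreddef
  have h0 : Pred 0 := by
    obtain ⟨c, d, h1, h2, hside⟩ := hblockj 0 (Nat.zero_le m)
    rcases hside with ⟨hc, hd⟩ | ⟨hc, hd⟩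
    · exact absurd (OINJ c d (small_forced hc hd (by omega))) h2
    · exact ⟨Nat.zero_le m, c, d, h1, h2, hc, hd⟩
  obtain ⟨J, hjm, hjP, hmax⟩ : ∃ J, J ≤ m ∧ Pred J ∧ ∀ k, J < k → k ≤ m → ¬ Pred k :=
    ⟨Nat.findGreatest Pred m, Nat.findGreatest_le m,
      Nat.findGreatest_spec (Nat.zero_le m) h0,
      fun k hk hkm => Nat.findGreatest_is_greatest hk hkm⟩
  obtain ⟨-, c, d, hcdH, hcdne, hc, hd⟩ := hjP
  have hωc : ((c:ℕ)+cs) % n < n := Nat.mod_lt _ npos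
  have hωd : ((d:ℕ)+cs) % n < n := Nat.mod_lt _ npos
  have hjlt : J < m := by
    rcases eq_or_lt_of_le hjm with heq | h
    · exfalso
      rw [heq] at hc hd
      refine hcdne (OINJ c d ?_)
      clear * - hc hd hωc hωd hδ hm
      omega
    · exact h
  obtain ⟨c', d', h1', h2', hside'⟩ := hblockj (J+1) (by omega)
  rcases hside' with ⟨hc', hd'⟩ | ⟨hc', hd'⟩
  · -- inside of the (J+1)-st chord: build a forbidden configuration
    obtain ⟨u1, u2, huH, hu1, hu2, hu12⟩ : ∃ u1 u2 : Fin n,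
        ({u1,u2} : Finset (Fin n)) ∈ H ∧
        (m - (J+1) < ((u1:ℕ)+cs) % n ∧ ((u1:ℕ)+cs) % n < m + δ + (J+1) + 1) ∧
        (m - (J+1) < ((u2:ℕ)+cs) % n ∧ ((u2:ℕ)+cs) % n < m + δ + (J+1) + 1) ∧
        ((u1:ℕ)+cs) % n < ((u2:ℕ)+cs) % n := by
      rcases lt_trichotomy (((c':ℕ)+cs) % n) (((d':ℕ)+cs) % n) with h | h | h
      · exact ⟨c', d', h1', hc', hd', h⟩
      · exact absurd (OINJ c' d' h) h2'
      · exact ⟨d', c', Finset.pair_comm c' d' ▸ h1', hd', hc', h⟩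
    obtain ⟨v1, v2, hvH, hv1, hv2, hv12⟩ : ∃ v1 v2 : Fin n,
        ({v1,v2} : Finset (Fin n)) ∈ H ∧
        (((v1:ℕ)+cs) % n < m - J ∨ m + δ + J + 1 < ((v1:ℕ)+cs) % n) ∧
        (((v2:ℕ)+cs) % n < m - J ∨ m + δ + J + 1 < ((v2:ℕ)+cs) % n) ∧
        ((v1:ℕ)+cs) % n < ((v2:ℕ)+cs) % n := by
      rcases lt_trichotomy (((c:ℕ)+cs) % n) (((d:ℕ)+cs) % n) with h | h | h
      · exact ⟨c, d, hcdH, hc, hd, h⟩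
      · exact absurd (OINJ c d h) hcdne
      · exact ⟨d, c, Finset.pair_comm c d ▸ hcdH, hd, hc, h⟩
    rcases chain_cases (L := m - J) (R := m + δ + J + 1)
        (by omega) hu12 (by omega) hv12 hv1 hv2 with hC | hC
    · exact docopy u1 u2 v1 v2 huH hvH hC
    · exact docopy u1 u2 v2 v1 huH (Finset.pair_comm v1 v2 ▸ hvH) hC
  · -- outside: contradicts maximality of J
    exact hmax (J+1) (by omega) (by omega) ⟨by omega, c', d', h1', h2', hc', hd'⟩


lemma sat_card {n : ℕ} (hn : 4 ≤ n) {H : Finset (Finset (Fin n))}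
    (hsat : IsSat (M1r 2) 2 H) : H.card = n := by
  obtain ⟨hunif, hfree, hadd⟩ := hsat
  have npos : 0 < n := by omega
  have hnorm : ∀ a b : Fin n, a ≠ b → ∃ a' b' : Fin n, a' < b' ∧
      ({a,b} : Finset (Fin n)) = {a',b'} ∧ (a:ℕ) + b = (a':ℕ) + b' := by
    intro a b h
    rcases lt_or_gt_of_ne h with h' | h'
    · exact ⟨a, b, h', rfl, rfl⟩
    · exact ⟨b, a, h', Finset.pair_comm a b, by omega⟩
  -- injectivity of the sum map
  have INJ : ∀ e1 ∈ H, ∀ e2 ∈ H,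
      (∑ x ∈ e1, (x:ℕ)) % n = (∑ x ∈ e2, (x:ℕ)) % n → e1 = e2 := by
    intro e1 he1 e2 he2 hsum
    by_contra hne2
    obtain ⟨a, b, hab, rfl⟩ := Finset.card_eq_two.mp (hunif e1 he1)
    obtain ⟨c, d, hcd, rfl⟩ := Finset.card_eq_two.mp (hunif e2 he2)
    rw [Finset.sum_pair hab, Finset.sum_pair hcd] at hsum
    obtain ⟨a', b', hab', heq1, hs1⟩ := hnorm a b hab
    obtain ⟨c', d', hcd', heq2, hs2⟩ := hnorm c d hcd
    rw [heq1] at he1 hne2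
    rw [heq2] at he2 hne2
    rw [hs1, hs2] at hsum
    exact inj_core hfree hab' hcd' he1 he2 hne2 hsum
  -- surjectivity of the sum map
  have SUR : ∀ t : ℕ, t < n → ∃ e ∈ H, (∑ x ∈ e, (x:ℕ)) % n = t :=
    sur_lemma hn hfree hadd
  -- conclusion by counting
  have hφ : ∀ e : Finset (Fin n), (∑ x ∈ e, (x:ℕ)) % n < n := fun e => Nat.mod_lt _ npos
  classical
  have hcard : H.card = (H.image (fun e : Finset (Fin n) => (⟨(∑ x ∈ e, (x:ℕ)) % n, hφ e⟩ : Fin n))).card := by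
    rw [Finset.card_image_of_injOn]
    intro e1 he1 e2 he2 h
    exact INJ e1 he1 e2 he2 (congrArg Fin.val h)
  have himg : H.image (fun e : Finset (Fin n) => (⟨(∑ x ∈ e, (x:ℕ)) % n, hφ e⟩ : Fin n)) = Finset.univ := by
    apply Finset.eq_univ_of_forall
    intro s
    obtain ⟨e, he, hs⟩ := SUR s.val s.isLt
    exact Finset.mem_image.mpr ⟨e, he, Fin.ext hs⟩
  rw [hcard, himg, Finset.card_univ, Fintype.card_fin]

-- STATEMENT 1
theorem sat_M1_two (n : ℕ) (hn : 4 ≤ n) :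
    (∀ H : Finset (Finset (Fin n)), IsSat (M1r 2) 2 H → H.card = n) ∧
      satNum (M1r 2) 2 n = n := by
  have part1 : ∀ H : Finset (Finset (Fin n)), IsSat (M1r 2) 2 H → H.card = n :=
    fun H h => sat_card hn h
  refine ⟨part1, ?_⟩
  classical
  have hempty : ¬ HasCopy (M1r 2) (∅ : Finset (Finset (Fin n))) := by
    rintro ⟨f, -, -, hedge⟩
    have h1 := hedge (Finset.univ.filter (fun i : Fin (2*2) => (i : ℕ) < 2)) (Finset.mem_insert_self _ _)
    exact absurd h1 (Finset.notMem_empty _)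
  have hex : ∃ H : Finset (Finset (Fin n)), IsSat (M1r 2) 2 H := by
    obtain ⟨H0, hH0, hmax⟩ := Finset.exists_max_image
      (Finset.univ.filter (fun H : Finset (Finset (Fin n)) =>
        (∀ h ∈ H, h.card = 2) ∧ ¬ HasCopy (M1r 2) H)) Finset.card
      ⟨∅, Finset.mem_filter.mpr ⟨Finset.mem_univ _,
        fun h hh => absurd hh (Finset.notMem_empty _), hempty⟩⟩
    rw [Finset.mem_filter] at hH0
    refine ⟨H0, hH0.2.1, hH0.2.2, ?_⟩
    intro e hcard hnin
    by_contra hnc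
    have hmem : insert e H0 ∈ Finset.univ.filter (fun H : Finset (Finset (Fin n)) =>
        (∀ h ∈ H, h.card = 2) ∧ ¬ HasCopy (M1r 2) H) := by
      refine Finset.mem_filter.mpr ⟨Finset.mem_univ _, fun h hh => ?_, hnc⟩
      rcases Finset.mem_insert.1 hh with rfl | hh
      · exact hcard
      · exact hH0.2.1 h hh
    have hle := hmax _ hmem
    rw [Finset.card_insert_of_notMem hnin] at hle
    omega
  obtain ⟨H0, hH0⟩ := hex
  have hset : {k | ∃ H : Finset (Finset (Fin n)), IsSat (M1r 2) 2 H ∧ H.card = k} = {n} := by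
    ext k
    simp only [Set.mem_setOf_eq, Set.mem_singleton_iff]
    constructor
    · rintro ⟨H, hH, rfl⟩
      exact part1 H hH
    · rintro rfl
      exact ⟨H0, hH0, part1 H0 hH0⟩
  rw [satNum, hset, csInf_singleton]
end

section
/- There exist a constant c > 0 and N such that for all n ≥ N, c·n ≤ sat_○(n, S_3) ≤ 3·n·log₂ n; that is, sat_○(n, S_3) = Ω(n) and sat_○(n, S_3) = O(n log n). -/
open Finset

-- ===== auxiliary machinery for sat_S3_bounds =====

def cyc5 {n : ℕ} (x a b c d : Fin n) : Prop :=
  (x<a ∧ a<b ∧ b<c ∧ c<d) ∨ (a<b ∧ b<c ∧ c<d ∧ d<x) ∨ (b<c ∧ c<d ∧ d<x ∧ x<a) ∨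
  (c<d ∧ d<x ∧ x<a ∧ a<b) ∨ (d<x ∧ x<a ∧ a<b ∧ b<c)

theorem copy_unfold {n : ℕ} (H : Finset (Finset (Fin n))) :
    HasCopy S3cgh H ↔ ∃ f : Fin 5 → Fin n, Function.Injective f ∧
      CyclicSorted (List.ofFn f) ∧ {f 0, f 1, f 3} ∈ H ∧ {f 0, f 2, f 4} ∈ H := by
  unfold HasCopy S3cgh
  simp only [Finset.mem_insert, Finset.mem_singleton, forall_eq_or_imp,
    forall_eq, Finset.image_insert, Finset.image_singleton]

theorem copy_iff {n : ℕ} (H : Finset (Finset (Fin n))) :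
    HasCopy S3cgh H ↔ ∃ x a b c d : Fin n, cyc5 x a b c d ∧
      ({x,a,c} : Finset (Fin n)) ∈ H ∧ ({x,b,d} : Finset (Fin n)) ∈ H := by
  rw [copy_unfold]
  constructor
  · rintro ⟨f, hinj, ⟨k, hchain⟩, h1, h2⟩
    refine ⟨f 0, f 1, f 2, f 3, f 4, ?_, h1, h2⟩
    have hofn : List.ofFn f = [f 0, f 1, f 2, f 3, f 4] := by
      simp [List.ofFn_succ]
    rw [hofn, ← List.rotate_mod] at hchain
    have hl : ([f 0, f 1, f 2, f 3, f 4] : List (Fin n)).length = 5 := rfl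
    rw [hl] at hchain
    have h5 : k % 5 < 5 := Nat.mod_lt _ (by norm_num)
    unfold cyc5
    interval_cases h : k % 5 <;>
      simp [List.rotate, List.Chain', List.isChain_cons_cons, and_assoc] at hchain <;> tauto
  · rintro ⟨x, a, b, c, d, hcyc, h1, h2⟩
    refine ⟨fun i : Fin 5 => if i.1 = 0 then x else if i.1 = 1 then a else if i.1 = 2 then b
      else if i.1 = 3 then c else d, ?_, ?_, h1, h2⟩
    · have hd : x ≠ a ∧ x ≠ b ∧ x ≠ c ∧ x ≠ d ∧ a ≠ b ∧ a ≠ c ∧ a ≠ d ∧ b ≠ c ∧ b ≠ d ∧ c ≠ d := by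
        unfold cyc5 at hcyc
        simp only [Fin.lt_def, ne_eq, Fin.ext_iff] at *
        omega
      obtain ⟨d1,d2,d3,d4,d5,d6,d7,d8,d9,d10⟩ := hd
      intro i j hij
      fin_cases i <;> fin_cases j <;> simp_all
    · have hofn : List.ofFn (fun i : Fin 5 => if i.1 = 0 then x else if i.1 = 1 then a
        else if i.1 = 2 then b else if i.1 = 3 then c else d) = [x,a,b,c,d] := by
        simp [List.ofFn_succ]
      rw [hofn]
      unfold cyc5 at hcyc
      rcases hcyc with h|h|h|h|h
      · exact ⟨0, by simp [List.Chain', List.isChain_cons_cons]; tauto⟩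
      · exact ⟨1, by simp [List.rotate, List.Chain', List.isChain_cons_cons]; tauto⟩
      · exact ⟨2, by simp [List.rotate, List.Chain', List.isChain_cons_cons]; tauto⟩
      · exact ⟨3, by simp [List.rotate, List.Chain', List.isChain_cons_cons]; tauto⟩
      · exact ⟨4, by simp [List.rotate, List.Chain', List.isChain_cons_cons]; tauto⟩

def consT {n : ℕ} (hn : 8 ≤ n) (v : Fin n) : Finset (Fin n) :=
  {v, v + ⟨1, by omega⟩, v + ⟨2, by omega⟩}

lemma w1_val {n : ℕ} (hn : 8 ≤ n) (v : Fin n) :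
    (v + (⟨1, by omega⟩ : Fin n)).1 = v.1 + 1 ∨ (v.1 = n - 1 ∧ (v + (⟨1, by omega⟩ : Fin n)).1 = 0) := by
  have hv := v.2
  have hadd : (v + (⟨1, by omega⟩ : Fin n)).1 = (v.1 + 1) % n := by rw [Fin.val_add]
  rcases lt_or_ge (v.1 + 1) n with h' | h'
  · left; rw [hadd, Nat.mod_eq_of_lt h']
  · right
    refine ⟨by omega, ?_⟩
    rw [hadd, show v.1 + 1 = n by omega, Nat.mod_self]

lemma w2_val {n : ℕ} (hn : 8 ≤ n) (v : Fin n) :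
    (v + (⟨2, by omega⟩ : Fin n)).1 = v.1 + 2 ∨ (v.1 = n - 2 ∧ (v + (⟨2, by omega⟩ : Fin n)).1 = 0)
      ∨ (v.1 = n - 1 ∧ (v + (⟨2, by omega⟩ : Fin n)).1 = 1) := by
  have hv := v.2
  have hadd : (v + (⟨2, by omega⟩ : Fin n)).1 = (v.1 + 2) % n := by rw [Fin.val_add]
  rcases lt_or_ge (v.1 + 2) n with h' | h'
  · left; rw [hadd, Nat.mod_eq_of_lt h']
  · rcases eq_or_lt_of_le h' with h1 | h1
    · right; left
      refine ⟨by omega, ?_⟩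
      rw [hadd, ← h1, Nat.mod_self]
    · right; right
      refine ⟨by omega, ?_⟩
      rw [hadd, show v.1 + 2 = n + 1 by omega, Nat.add_mod_left n 1, Nat.mod_eq_of_lt (by omega)]

lemma cons_not_copy1 {n : ℕ} (hn : 8 ≤ n) (x a b c d v : Fin n) (h : cyc5 x a b c d) :
    ({x, a, c} : Finset (Fin n)) ≠ consT hn v := by
  intro heq
  have hx : x = v ∨ x = v + ⟨1, by omega⟩ ∨ x = v + ⟨2, by omega⟩ := by
    have : x ∈ consT hn v := heq ▸ (by simp)
    simpa [consT] using this
  have ha : a = v ∨ a = v + ⟨1, by omega⟩ ∨ a = v + ⟨2, by omega⟩ := by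
    have : a ∈ consT hn v := heq ▸ (by simp)
    simpa [consT] using this
  have hc : c = v ∨ c = v + ⟨1, by omega⟩ ∨ c = v + ⟨2, by omega⟩ := by
    have : c ∈ consT hn v := heq ▸ (by simp)
    simpa [consT] using this
  have h1 := w1_val hn v
  have h2 := w2_val hn v
  have hxv := x.2; have hav := a.2; have hbv := b.2; have hcv := c.2; have hdv := d.2
  have hvv := v.2
  unfold cyc5 at h
  simp only [Fin.lt_def, Fin.ext_iff] at h hx ha hc
  rcases h1 with h1 | ⟨h1a, h1b⟩ <;> rcases h2 with h2 | ⟨h2a, h2b⟩ | ⟨h2a, h2b⟩ <;>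
    rcases hx with hx | hx | hx <;> rcases ha with ha | ha | ha <;>
    rcases hc with hc | hc | hc <;> rcases h with h | h | h | h | h <;> omega

lemma cons_not_copy2 {n : ℕ} (hn : 8 ≤ n) (x a b c d v : Fin n) (h : cyc5 x a b c d) :
    ({x, b, d} : Finset (Fin n)) ≠ consT hn v := by
  intro heq
  have hx : x = v ∨ x = v + ⟨1, by omega⟩ ∨ x = v + ⟨2, by omega⟩ := by
    have : x ∈ consT hn v := heq ▸ (by simp)
    simpa [consT] using this
  have hb : b = v ∨ b = v + ⟨1, by omega⟩ ∨ b = v + ⟨2, by omega⟩ := by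
    have : b ∈ consT hn v := heq ▸ (by simp)
    simpa [consT] using this
  have hd : d = v ∨ d = v + ⟨1, by omega⟩ ∨ d = v + ⟨2, by omega⟩ := by
    have : d ∈ consT hn v := heq ▸ (by simp)
    simpa [consT] using this
  have h1 := w1_val hn v
  have h2 := w2_val hn v
  have hxv := x.2; have hav := a.2; have hbv := b.2; have hcv := c.2; have hdv := d.2
  have hvv := v.2
  unfold cyc5 at h
  simp only [Fin.lt_def, Fin.ext_iff] at h hx hb hd
  rcases h1 with h1 | ⟨h1a, h1b⟩ <;> rcases h2 with h2 | ⟨h2a, h2b⟩ | ⟨h2a, h2b⟩ <;>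
    rcases hx with hx | hx | hx <;> rcases hb with hb | hb | hb <;>
    rcases hd with hd | hd | hd <;> rcases h with h | h | h | h | h <;> omega
def Hsat (n : ℕ) (hn : 8 ≤ n) : Finset (Finset (Fin n)) :=
  (univ.image fun v => consT hn v)
  ∪ ((univ.filter fun j : Fin n => 1 ≤ j.1 ∧ j.1 ≤ n-2).image
      fun j => {⟨0, by omega⟩, j, j + ⟨1, by omega⟩})
  ∪ ((univ.filter fun j : Fin n => 3 ≤ j.1).image
      fun j => {⟨0, by omega⟩, ⟨1, by omega⟩, j})

lemma mem_Hsat {n : ℕ} (hn : 8 ≤ n) (e : Finset (Fin n)) :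
    e ∈ Hsat n hn ↔ (∃ v, consT hn v = e) ∨
      (∃ j : Fin n, 1 ≤ j.1 ∧ j.1 ≤ n-2 ∧ ({⟨0, by omega⟩, j, j + ⟨1, by omega⟩} : Finset (Fin n)) = e) ∨
      (∃ j : Fin n, 3 ≤ j.1 ∧ ({⟨0, by omega⟩, ⟨1, by omega⟩, j} : Finset (Fin n)) = e) := by
  unfold Hsat
  simp only [Finset.mem_union, Finset.mem_image, Finset.mem_filter, Finset.mem_univ, true_and,
    and_assoc, or_assoc]

lemma card_Hsat {n : ℕ} (hn : 8 ≤ n) : (Hsat n hn).card ≤ 3 * n := by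
  unfold Hsat
  refine le_trans (Finset.card_union_le _ _) ?_
  have c1 : ((univ : Finset (Fin n)).image fun v => consT hn v).card ≤ n := by
    refine le_trans (Finset.card_image_le) ?_; simp
  have c2 : (((univ.filter fun j : Fin n => 1 ≤ j.1 ∧ j.1 ≤ n-2)).image
      (fun j => ({⟨0, by omega⟩, j, j + ⟨1, by omega⟩} : Finset (Fin n)))).card ≤ n := by
    refine le_trans (Finset.card_image_le) (le_trans (Finset.card_filter_le _ _) ?_); simp
  have c3 : (((univ.filter fun j : Fin n => 3 ≤ j.1)).image
      (fun j => ({⟨0, by omega⟩, ⟨1, by omega⟩, j} : Finset (Fin n)))).card ≤ n := by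
    refine le_trans (Finset.card_image_le) (le_trans (Finset.card_filter_le _ _) ?_); simp
  have := Finset.card_union_le ((univ : Finset (Fin n)).image fun v => consT hn v)
    (((univ.filter fun j : Fin n => 1 ≤ j.1 ∧ j.1 ≤ n-2)).image
      (fun j => ({⟨0, by omega⟩, j, j + ⟨1, by omega⟩} : Finset (Fin n))))
  omega

lemma add_val_eq {n : ℕ} (j : Fin n) (k : ℕ) (hk : k < n) (h : j.1 + k < n) :
    j + (⟨k, hk⟩ : Fin n) = ⟨j.1 + k, h⟩ := by
  apply Fin.ext
  rw [Fin.val_add]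
  exact Nat.mod_eq_of_lt h

lemma card3_Hsat {n : ℕ} (hn : 8 ≤ n) : ∀ h ∈ Hsat n hn, h.card = 3 := by
  intro h hmem
  rw [mem_Hsat hn] at hmem
  rcases hmem with ⟨v, rfl⟩ | ⟨j, hj1, hj2, rfl⟩ | ⟨j, hj, rfl⟩
  · have hv := v.2
    have h1 := w1_val hn v
    have h2 := w2_val hn v
    rw [consT, Finset.card_insert_of_notMem, Finset.card_insert_of_notMem, Finset.card_singleton]
    · simp only [Finset.mem_singleton, ne_eq, Fin.ext_iff]
      omega
    · simp only [Finset.mem_insert, Finset.mem_singleton, ne_eq, Fin.ext_iff]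
      push_neg
      omega
  · have hj' := j.2
    have h1 : (j + (⟨1, by omega⟩ : Fin n)).1 = j.1 + 1 := by
      rw [add_val_eq j 1 (by omega) (by omega)]
    rw [Finset.card_insert_of_notMem, Finset.card_insert_of_notMem, Finset.card_singleton]
    · simp only [Finset.mem_singleton, ne_eq, Fin.ext_iff]
      omega
    · simp only [Finset.mem_insert, Finset.mem_singleton, ne_eq, Fin.ext_iff]
      push_neg
      omega
  · rw [Finset.card_insert_of_notMem, Finset.card_insert_of_notMem, Finset.card_singleton]
    · simp only [Finset.mem_singleton, ne_eq, Fin.ext_iff]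
      omega
    · simp only [Finset.mem_insert, Finset.mem_singleton, ne_eq, Fin.ext_iff]
      push_neg
      omega

lemma shared_zero {n : ℕ} (x a b c d z : Fin n) (hcyc : cyc5 x a b c d)
    (h1 : z = x ∨ z = a ∨ z = c) (h2 : z = x ∨ z = b ∨ z = d) : x = z := by
  unfold cyc5 at hcyc
  simp only [Fin.lt_def] at hcyc
  simp only [Fin.ext_iff] at *
  rcases h1 with h1 | h1 | h1 <;> rcases h2 with h2 | h2 | h2 <;>
    rcases hcyc with h | h | h | h | h <;> omega

lemma cyc5_zero {n : ℕ} (x a b c d : Fin n) (hcyc : cyc5 x a b c d) (hx : x.1 = 0) :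
    x.1 < a.1 ∧ a.1 < b.1 ∧ b.1 < c.1 ∧ c.1 < d.1 := by
  unfold cyc5 at hcyc
  simp only [Fin.lt_def] at hcyc
  omega

lemma nocopy_Hsat {n : ℕ} (hn : 8 ≤ n) : ¬ HasCopy S3cgh (Hsat n hn) := by
  rw [copy_iff]
  rintro ⟨x, a, b, c, d, hcyc, hA, hB⟩
  rw [mem_Hsat] at hA hB
  rcases hA with ⟨v, hA⟩ | hA
  · exact cons_not_copy1 hn x a b c d v hcyc hA.symm
  rcases hB with ⟨v, hB⟩ | hB
  · exact cons_not_copy2 hn x a b c d v hcyc hB.symm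
  -- both star edges: they contain 0, so x = 0
  have hz : (⟨0, by omega⟩ : Fin n) = x ∨ (⟨0, by omega⟩ : Fin n) = a ∨ (⟨0, by omega⟩ : Fin n) = c := by
    rcases hA with ⟨j, _, _, hA⟩ | ⟨j, _, hA⟩ <;>
    · have : (⟨0, by omega⟩ : Fin n) ∈ ({x,a,c} : Finset (Fin n)) := hA ▸ (by simp)
      simpa using this
  have hz2 : (⟨0, by omega⟩ : Fin n) = x ∨ (⟨0, by omega⟩ : Fin n) = b ∨ (⟨0, by omega⟩ : Fin n) = d := by
    rcases hB with ⟨j, _, _, hB⟩ | ⟨j, _, hB⟩ <;>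
    · have : (⟨0, by omega⟩ : Fin n) ∈ ({x,b,d} : Finset (Fin n)) := hB ▸ (by simp)
      simpa using this
  have hxz := shared_zero x a b c d _ hcyc hz hz2
  have hx0 : x.1 = 0 := by rw [hxz]
  obtain ⟨o1, o2, o3, o4⟩ := cyc5_zero x a b c d hcyc hx0
  rcases hA with ⟨j, hj1, hj2, hA⟩ | ⟨j, hj3, hA⟩
  · -- A = {0, j, j+1}
    have hjp : (j + (⟨1, by omega⟩ : Fin n)).1 = j.1 + 1 := by
      have := w1_val hn j; have := j.2; omega
    have ham : a ∈ ({⟨0, by omega⟩, j, j + ⟨1, by omega⟩} : Finset (Fin n)) := by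
      rw [hA]; simp
    have hcm : c ∈ ({⟨0, by omega⟩, j, j + ⟨1, by omega⟩} : Finset (Fin n)) := by
      rw [hA]; simp
    simp only [Finset.mem_insert, Finset.mem_singleton, Fin.ext_iff] at ham hcm
    omega
  · -- A = {0, 1, j} : a = 1, c = j
    have ham : a ∈ ({⟨0, by omega⟩, ⟨1, by omega⟩, j} : Finset (Fin n)) := by
      rw [hA]; simp
    have hcm : c ∈ ({⟨0, by omega⟩, ⟨1, by omega⟩, j} : Finset (Fin n)) := by
      rw [hA]; simp
    simp only [Finset.mem_insert, Finset.mem_singleton, Fin.ext_iff] at ham hcm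
    rcases hB with ⟨k, hk1, hk2, hB⟩ | ⟨k, hk3, hB⟩
    · have hkp : (k + (⟨1, by omega⟩ : Fin n)).1 = k.1 + 1 := by
        have := w1_val hn k; have := k.2; omega
      have hbm : b ∈ ({⟨0, by omega⟩, k, k + ⟨1, by omega⟩} : Finset (Fin n)) := by
        rw [hB]; simp
      have hdm : d ∈ ({⟨0, by omega⟩, k, k + ⟨1, by omega⟩} : Finset (Fin n)) := by
        rw [hB]; simp
      simp only [Finset.mem_insert, Finset.mem_singleton, Fin.ext_iff] at hbm hdm
      omega
    · have hbm : b ∈ ({⟨0, by omega⟩, ⟨1, by omega⟩, k} : Finset (Fin n)) := by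
        rw [hB]; simp
      have hdm : d ∈ ({⟨0, by omega⟩, ⟨1, by omega⟩, k} : Finset (Fin n)) := by
        rw [hB]; simp
      simp only [Finset.mem_insert, Finset.mem_singleton, Fin.ext_iff] at hbm hdm
      omega

lemma triple_sorted {n : ℕ} (e : Finset (Fin n)) (he : e.card = 3) :
    ∃ α β γ : Fin n, α.1 < β.1 ∧ β.1 < γ.1 ∧ e = {α, β, γ} := by
  obtain ⟨x, y, z, hxy, hxz, hyz, rfl⟩ := Finset.card_eq_three.mp he
  have h1 : x.1 ≠ y.1 := fun h => hxy (Fin.ext h)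
  have h2 : x.1 ≠ z.1 := fun h => hxz (Fin.ext h)
  have h3 : y.1 ≠ z.1 := fun h => hyz (Fin.ext h)
  rcases Nat.lt_or_ge x.1 y.1 with hxy1 | hxy1
  · rcases Nat.lt_or_ge y.1 z.1 with hyz1 | hyz1
    · exact ⟨x, y, z, hxy1, hyz1, rfl⟩
    · rcases Nat.lt_or_ge x.1 z.1 with hxz1 | hxz1
      · exact ⟨x, z, y, hxz1, by omega, by ext t; simp; tauto⟩
      · exact ⟨z, x, y, by omega, hxy1, by ext t; simp; tauto⟩
  · rcases Nat.lt_or_ge x.1 z.1 with hxz1 | hxz1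
    · exact ⟨y, x, z, by omega, hxz1, by ext t; simp; tauto⟩
    · rcases Nat.lt_or_ge y.1 z.1 with hyz1 | hyz1
      · exact ⟨y, z, x, hyz1, by omega, by ext t; simp; tauto⟩
      · exact ⟨z, y, x, by omega, by omega, by ext t; simp; tauto⟩

lemma sat_Hsat {n : ℕ} (hn : 8 ≤ n) : ∀ e : Finset (Fin n), e.card = 3 → e ∉ Hsat n hn →
    HasCopy S3cgh (insert e (Hsat n hn)) := by
  intro e hcard hne
  obtain ⟨α, β, γ, hab, hbc, rfl⟩ := triple_sorted e hcard
  have hav := α.2; have hbv := β.2; have hgv := γ.2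
  rw [copy_iff]
  by_cases ha0 : α.1 = 0
  · -- e = {0, β, γ}
    have hb2 : 2 ≤ β.1 := by
      by_contra h
      have hb1 : β.1 = 1 := by omega
      apply hne; rw [mem_Hsat]
      by_cases hg2 : γ.1 = 2
      · left
        refine ⟨α, ?_⟩
        have e1 : α + (⟨1, by omega⟩ : Fin n) = β := by
          rw [add_val_eq α 1 (by omega) (by omega)]; exact Fin.ext (by simp; omega)
        have e2 : α + (⟨2, by omega⟩ : Fin n) = γ := by
          rw [add_val_eq α 2 (by omega) (by omega)]; exact Fin.ext (by simp; omega)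
        rw [consT, e1, e2]
      · right; right
        refine ⟨γ, by omega, ?_⟩
        have e0 : (⟨0, by omega⟩ : Fin n) = α := Fin.ext (by simp; omega)
        have e1 : (⟨1, by omega⟩ : Fin n) = β := Fin.ext (by simp; omega)
        rw [e0, e1]
    have hg2 : β.1 + 2 ≤ γ.1 := by
      by_contra h
      apply hne; rw [mem_Hsat]
      right; left
      refine ⟨β, by omega, by omega, ?_⟩
      have e0 : (⟨0, by omega⟩ : Fin n) = α := Fin.ext (by simp; omega)
      have e1 : β + (⟨1, by omega⟩ : Fin n) = γ := by
        rw [add_val_eq β 1 (by omega) (by omega)]; exact Fin.ext (by simp; omega)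
      rw [e0, e1]
    refine ⟨α, ⟨1, by omega⟩, β, ⟨β.1+1, by omega⟩, γ, ?_, ?_, ?_⟩
    · simp only [cyc5, Fin.lt_def]; omega
    · apply Finset.mem_insert_of_mem
      rw [mem_Hsat]
      right; right
      refine ⟨⟨β.1+1, by omega⟩, by simp; omega, ?_⟩
      have e0 : (⟨0, by omega⟩ : Fin n) = α := Fin.ext (by simp; omega)
      rw [e0]
    · exact Finset.mem_insert_self _ _
  · -- 0 < α
    by_cases hg : β.1 + 2 ≤ γ.1
    · refine ⟨β, ⟨β.1+1, by omega⟩, γ, ⟨0, by omega⟩, α, ?_, ?_, ?_⟩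
      · simp only [cyc5, Fin.lt_def]; omega
      · apply Finset.mem_insert_of_mem
        rw [mem_Hsat]
        right; left
        refine ⟨β, by omega, by omega, ?_⟩
        rw [add_val_eq β 1 (by omega) (by omega)]
        ext t; simp; tauto
      · have hperm : ({β, γ, α} : Finset (Fin n)) = {α, β, γ} := by ext t; simp; tauto
        rw [hperm]
        exact Finset.mem_insert_self _ _
    · -- γ = β + 1
      have hba : α.1 + 2 ≤ β.1 := by
        by_contra h
        apply hne; rw [mem_Hsat]
        left
        refine ⟨α, ?_⟩
        have e1 : α + (⟨1, by omega⟩ : Fin n) = β := by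
          rw [add_val_eq α 1 (by omega) (by omega)]; exact Fin.ext (by simp; omega)
        have e2 : α + (⟨2, by omega⟩ : Fin n) = γ := by
          rw [add_val_eq α 2 (by omega) (by omega)]; exact Fin.ext (by simp; omega)
        rw [consT, e1, e2]
      refine ⟨β, γ, ⟨0, by omega⟩, α, ⟨β.1-1, by omega⟩, ?_, ?_, ?_⟩
      · simp only [cyc5, Fin.lt_def]; omega
      · have hperm : ({β, γ, α} : Finset (Fin n)) = {α, β, γ} := by ext t; simp; tauto
        rw [hperm]
        exact Finset.mem_insert_self _ _
      · apply Finset.mem_insert_of_mem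
        rw [mem_Hsat]
        right; left
        refine ⟨⟨β.1-1, by omega⟩, by simp; omega, by simp; omega, ?_⟩
        have e1 : (⟨β.1-1, by omega⟩ : Fin n) + (⟨1, by omega⟩ : Fin n) = β := by
          rw [add_val_eq _ 1 (by omega) (by simp; omega)]; exact Fin.ext (by simp; omega)
        rw [e1]
        ext t; simp; tauto

lemma consT_card {n : ℕ} (hn : 8 ≤ n) (v : Fin n) : (consT hn v).card = 3 := by
  have hv := v.2
  have h1 := w1_val hn v
  have h2 := w2_val hn v
  rw [consT, Finset.card_insert_of_notMem, Finset.card_insert_of_notMem, Finset.card_singleton]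
  · simp only [Finset.mem_singleton, ne_eq, Fin.ext_iff]
    omega
  · simp only [Finset.mem_insert, Finset.mem_singleton, ne_eq, Fin.ext_iff]
    push_neg
    omega

lemma consT_inj {n : ℕ} (hn : 8 ≤ n) : Function.Injective (consT hn) := by
  intro u v huv
  have m1 : u = v ∨ u = v + ⟨1, by omega⟩ ∨ u = v + ⟨2, by omega⟩ := by
    have : u ∈ consT hn v := huv ▸ (by simp [consT])
    simpa [consT] using this
  have m2 : v = u ∨ v = u + ⟨1, by omega⟩ ∨ v = u + ⟨2, by omega⟩ := by
    have : v ∈ consT hn u := huv ▸ (by simp [consT])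
    simpa [consT] using this
  have h1u := w1_val hn u; have h2u := w2_val hn u
  have h1v := w1_val hn v; have h2v := w2_val hn v
  have huu := u.2; have hvv := v.2
  simp only [Fin.ext_iff] at m1 m2 ⊢
  rcases h1u with h1u | ⟨h1u, h1u'⟩ <;> rcases h2u with h2u | ⟨h2u, h2u'⟩ | ⟨h2u, h2u'⟩ <;>
    rcases h1v with h1v | ⟨h1v, h1v'⟩ <;> rcases h2v with h2v | ⟨h2v, h2v'⟩ | ⟨h2v, h2v'⟩ <;>
    rcases m1 with m1 | m1 | m1 <;> rcases m2 with m2 | m2 | m2 <;> omega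

lemma lb_sat {n : ℕ} (hn : 8 ≤ n) (H : Finset (Finset (Fin n))) (hs : IsSat S3cgh 3 H) :
    n ≤ H.card := by
  obtain ⟨hcards, hfree, hsat⟩ := hs
  have hsub : ∀ v : Fin n, consT hn v ∈ H := by
    intro v
    by_contra hv
    have hcopy := hsat _ (consT_card hn v) hv
    rw [copy_iff] at hcopy
    obtain ⟨x, a, b, c, d, hcyc, hA, hB⟩ := hcopy
    rw [Finset.mem_insert] at hA hB
    rcases hA with hA | hA
    · exact cons_not_copy1 hn x a b c d v hcyc hA
    rcases hB with hB | hB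
    · exact cons_not_copy2 hn x a b c d v hcyc hB
    exact hfree ((copy_iff H).mpr ⟨x, a, b, c, d, hcyc, hA, hB⟩)
  calc n = ((univ : Finset (Fin n)).image (consT hn)).card := by
        rw [Finset.card_image_of_injective _ (consT_inj hn), card_univ, Fintype.card_fin]
    _ ≤ H.card := Finset.card_le_card (by
        intro t ht
        simp only [Finset.mem_image] at ht
        obtain ⟨v, _, rfl⟩ := ht
        exact hsub v)

-- STATEMENT 5
theorem sat_S3_bounds : ∃ c : ℝ, 0 < c ∧ ∃ N : ℕ, ∀ n : ℕ, N ≤ n →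
    c * n ≤ (satNum S3cgh 3 n : ℝ) ∧ (satNum S3cgh 3 n : ℝ) ≤ 3 * n * Real.logb 2 n := by
  refine ⟨1, one_pos, 8, fun n hn => ?_⟩
  have hsatH : IsSat S3cgh 3 (Hsat n hn) := ⟨card3_Hsat hn, nocopy_Hsat hn, sat_Hsat hn⟩
  have hmem : (Hsat n hn).card ∈
      {k | ∃ H : Finset (Finset (Fin n)), IsSat S3cgh 3 H ∧ H.card = k} :=
    ⟨Hsat n hn, hsatH, rfl⟩
  have hup : satNum S3cgh 3 n ≤ 3 * n := le_trans (Nat.sInf_le hmem) (card_Hsat hn)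
  have hlow : n ≤ satNum S3cgh 3 n := by
    have hne : {k | ∃ H : Finset (Finset (Fin n)), IsSat S3cgh 3 H ∧ H.card = k}.Nonempty :=
      ⟨_, hmem⟩
    obtain ⟨H0, hH0, hcard0⟩ := Nat.sInf_mem hne
    unfold satNum
    rw [← hcard0]
    exact lb_sat hn H0 hH0
  constructor
  · rw [one_mul]
    exact_mod_cast hlow
  · have h3 : (satNum S3cgh 3 n : ℝ) ≤ 3 * n := by exact_mod_cast hup
    have hlog : 1 ≤ Real.logb 2 n := by
      have h2n : (2 : ℝ) ≤ (n : ℝ) := by exact_mod_cast (by omega : 2 ≤ n)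
      rw [Real.logb, le_div_iff₀ (Real.log_pos (by norm_num))]
      rw [one_mul]
      exact Real.log_le_log (by norm_num) h2n
    calc (satNum S3cgh 3 n : ℝ) ≤ 3 * n := h3
      _ = 3 * n * 1 := (mul_one _).symm
      _ ≤ 3 * n * Real.logb 2 n := by
        apply mul_le_mul_of_nonneg_left hlog (by positivity)
end

section
/- For every n ≥ 6, every M_3-saturated 3-cgh on Ω_n contains every triple of the form {v_i, v_{i+1}, v_j} with v_j ∉ {v_i, v_{i+1}} (i.e., every triple containing a pair of cyclically consecutive vertices), and consequently sat_○(n, M_3) ≥ n(n−3). -/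
open Finset

section AuxM3
open Fin.NatCast
set_option maxHeartbeats 2000000 in
lemma keyL {n : ℕ} (f : Fin 6 → Fin n)
    (hcs : CyclicSorted (List.ofFn f)) (a b : Fin 6) (hab : a ≠ b)
    (hpar : a.val % 2 = b.val % 2) (heq : (f b).val = ((f a).val + 1) % n) : False := by
  obtain ⟨k, hk⟩ := hcs
  rw [← List.rotate_mod] at hk
  have hlen : (List.ofFn f).length = 6 := by simp
  rw [hlen] at hk
  have hof : List.ofFn f = [f 0, f 1, f 2, f 3, f 4, f 5] := rfl
  rw [hof] at hk
  have b0 : (f 0).val < n := (f 0).2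
  have b1 : (f 1).val < n := (f 1).2
  have b2 : (f 2).val < n := (f 2).2
  have b3 : (f 3).val < n := (f 3).2
  have b4 : (f 4).val < n := (f 4).2
  have b5 : (f 5).val < n := (f 5).2
  have hd : ((f a).val + 1) % n = (f a).val + 1 ∨ ((f a).val + 1 = n ∧ ((f a).val + 1) % n = 0) := by
    rcases Nat.lt_or_ge ((f a).val + 1) n with h | h
    · exact Or.inl (Nat.mod_eq_of_lt h)
    · have : (f a).val < n := (f a).2
      have he : (f a).val + 1 = n := by omega
      right; simp [he]
  have hk6 : k % 6 < 6 := Nat.mod_lt _ (by omega)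
  interval_cases h : k % 6 <;>
    [ (rw [show ([f 0, f 1, f 2, f 3, f 4, f 5]).rotate 0 = [f 0, f 1, f 2, f 3, f 4, f 5] from rfl] at hk);
      (rw [show ([f 0, f 1, f 2, f 3, f 4, f 5]).rotate 1 = [f 1, f 2, f 3, f 4, f 5, f 0] from rfl] at hk);
      (rw [show ([f 0, f 1, f 2, f 3, f 4, f 5]).rotate 2 = [f 2, f 3, f 4, f 5, f 0, f 1] from rfl] at hk);
      (rw [show ([f 0, f 1, f 2, f 3, f 4, f 5]).rotate 3 = [f 3, f 4, f 5, f 0, f 1, f 2] from rfl] at hk);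
      (rw [show ([f 0, f 1, f 2, f 3, f 4, f 5]).rotate 4 = [f 4, f 5, f 0, f 1, f 2, f 3] from rfl] at hk);
      (rw [show ([f 0, f 1, f 2, f 3, f 4, f 5]).rotate 5 = [f 5, f 0, f 1, f 2, f 3, f 4] from rfl] at hk)] <;>
    simp only [List.Chain', List.isChain_cons_cons, List.isChain_singleton, and_true, Fin.lt_def] at hk <;>
    fin_cases a <;> fin_cases b <;> simp_all <;> omega


variable {n : ℕ} [NeZero n]

lemma shift_inj {i : Fin n} {a b : ℕ} (ha : a < n) (hb : b < n)
    (h : i + (a : Fin n) = i + (b : Fin n)) : a = b := by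
  have h2 : (a : Fin n) = b := add_left_cancel h
  have := congrArg Fin.val h2
  rwa [Fin.val_cast_of_lt ha, Fin.val_cast_of_lt hb] at this

lemma shift_ne {i : Fin n} {a b : ℕ} (ha : a < n) (hb : b < n) (hab : a ≠ b) :
    i + (a : Fin n) ≠ i + (b : Fin n) := fun h => hab (shift_inj ha hb h)

lemma shift_ne0 {i : Fin n} {a : ℕ} (ha0 : 0 < a) (ha : a < n) :
    i + (a : Fin n) ≠ i := by
  have := shift_ne (i := i) (b := 0) ha (by omega) (by omega)
  simpa using this

lemma succ_val (i : Fin n) (h1 : 1 < n) : (i + ((1:ℕ) : Fin n)).val = (i.val + 1) % n := by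
  rw [Fin.val_add, Fin.val_cast_of_lt h1]

lemma cast_sum_eq {a b : ℕ} : ((a : Fin n) + (b : Fin n)) = ((a + b : ℕ) : Fin n) := by
  push_cast; ring

lemma succ_eq_iff {i j : Fin n} (h1 : 1 ≤ n) :
    j + ((1:ℕ) : Fin n) = i ↔ j = i + ((n - 1 : ℕ) : Fin n) := by
  have hsum : ((1:ℕ) : Fin n) + ((n - 1 : ℕ) : Fin n) = 0 := by
    rw [cast_sum_eq, show 1 + (n-1) = n by omega, Fin.natCast_self]
  constructor
  · intro h
    calc j = j + (((1:ℕ) : Fin n) + ((n - 1 : ℕ) : Fin n)) := by rw [hsum, add_zero]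
    _ = (j + ((1:ℕ) : Fin n)) + ((n - 1 : ℕ) : Fin n) := by rw [add_assoc]
    _ = i + ((n - 1 : ℕ) : Fin n) := by rw [h]
  · rintro rfl
    rw [add_assoc, add_comm ((n - 1 : ℕ) : Fin n), hsum, add_zero]

section
variable {n : ℕ} [NeZero n]

lemma keyL' (hn : 6 ≤ n) (f : Fin 6 → Fin n) (hcs : CyclicSorted (List.ofFn f))
    (S : Finset (Fin 6)) (hS : S = {0,2,4} ∨ S = {1,3,5}) (i : Fin n)
    (hi : i ∈ S.image f) (hi1 : i + ((1:ℕ) : Fin n) ∈ S.image f) : False := by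
  obtain ⟨a, ha, hfa⟩ := Finset.mem_image.mp hi
  obtain ⟨b, hb, hfb⟩ := Finset.mem_image.mp hi1
  have hab : a ≠ b := by
    rintro rfl
    rw [hfa] at hfb
    exact shift_ne0 (by omega) (by omega) hfb.symm
  have hpar : a.val % 2 = b.val % 2 := by
    have h024 : ∀ x ∈ ({0,2,4} : Finset (Fin 6)), x.val % 2 = 0 := by decide
    have h135 : ∀ x ∈ ({1,3,5} : Finset (Fin 6)), x.val % 2 = 1 := by decide
    rcases hS with rfl | rfl
    · rw [h024 a ha, h024 b hb]
    · rw [h135 a ha, h135 b hb]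
  exact keyL f hcs a b hab hpar (by rw [hfb, hfa, succ_val _ (by omega)])

lemma copy_no_adj (hn : 6 ≤ n) (H : Finset (Finset (Fin n)))
    (hfree : ¬ HasCopy M3cgh H) (i j : Fin n)
    (hcopy : HasCopy M3cgh (insert ({i, i + ((1:ℕ) : Fin n), j} : Finset (Fin n)) H)) :
    False := by
  obtain ⟨f, hinj, hcs, hmem⟩ := hcopy
  have hE1 : ({0,2,4} : Finset (Fin 6)) ∈ M3cgh.edges := Finset.mem_insert_self _ _
  have hE2 : ({1,3,5} : Finset (Fin 6)) ∈ M3cgh.edges :=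
    Finset.mem_insert_of_mem (Finset.mem_singleton_self _)
  have h1 := hmem _ hE1
  have h2 := hmem _ hE2
  rw [Finset.mem_insert] at h1 h2
  have hcases : (({0,2,4} : Finset (Fin 6)).image f = {i, i + ((1:ℕ) : Fin n), j}) ∨
      (({1,3,5} : Finset (Fin 6)).image f = {i, i + ((1:ℕ) : Fin n), j}) := by
    rcases h1 with h1 | h1
    · exact Or.inl h1
    rcases h2 with h2 | h2
    · exact Or.inr h2
    exact absurd ⟨f, hinj, hcs, by
      intro e' he'
      have : e' = ({0,2,4} : Finset (Fin 6)) ∨ e' = ({1,3,5} : Finset (Fin 6)) := by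
        have : e' ∈ ({({0,2,4} : Finset (Fin 6)), ({1,3,5} : Finset (Fin 6))} :
          Finset (Finset (Fin 6))) := he'
        rcases Finset.mem_insert.mp this with h | h
        · exact Or.inl h
        · exact Or.inr (Finset.mem_singleton.mp h)
      rcases this with rfl | rfl <;> assumption⟩ hfree
  rcases hcases with h | h
  · exact keyL' hn f hcs _ (Or.inl rfl) i ((Finset.ext_iff.mp h _).mpr (by simp)) ((Finset.ext_iff.mp h _).mpr (by simp))
  · exact keyL' hn f hcs _ (Or.inr rfl) i ((Finset.ext_iff.mp h _).mpr (by simp)) ((Finset.ext_iff.mp h _).mpr (by simp))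

lemma sat_mem (hn : 6 ≤ n) (H : Finset (Finset (Fin n))) (hsat : IsSat M3cgh 3 H)
    (i j : Fin n) (hj1 : j ≠ i) (hj2 : j ≠ i + ((1:ℕ) : Fin n)) :
    ({i, i + ((1:ℕ) : Fin n), j} : Finset (Fin n)) ∈ H := by
  by_contra hne
  have hcard : ({i, i + ((1:ℕ) : Fin n), j} : Finset (Fin n)).card = 3 := by
    rw [Finset.card_insert_of_notMem (by
          simp only [Finset.mem_insert, Finset.mem_singleton]
          push_neg
          exact ⟨(shift_ne0 (by omega) (by omega)).symm, Ne.symm hj1⟩),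
        Finset.card_insert_of_notMem (by simpa using Ne.symm hj2),
        Finset.card_singleton]
  exact copy_no_adj hn H hsat.2.1 i j (hsat.2.2 _ hcard hne)

-- counting
lemma card_bound (hn : 6 ≤ n) (H : Finset (Finset (Fin n))) (hsat : IsSat M3cgh 3 H) :
    n * (n - 3) ≤ H.card := by
  classical
  set c1 : Fin n := ((1:ℕ) : Fin n) with hc1
  set c2 : Fin n := ((2:ℕ) : Fin n) with hc2
  have hc12 : ∀ i : Fin n, i + c1 + c1 = i + c2 := by
    intro i; rw [add_assoc, hc1, hc2, cast_sum_eq]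
  have hc21 : ∀ i : Fin n, i + c2 + c1 = i + ((3:ℕ) : Fin n) := by
    intro i; rw [add_assoc, hc1, hc2, cast_sum_eq]
  set A : Finset (Finset (Fin n)) :=
    univ.image (fun i : Fin n => ({i, i + c1, i + c2} : Finset (Fin n))) with hA
  set B : Finset (Finset (Fin n)) :=
    univ.biUnion (fun i : Fin n =>
      ((univ.filter fun j : Fin n => j ≠ i ∧ j ≠ i + c1 ∧ j ≠ i + c2 ∧ j + c1 ≠ i)).image
        (fun j => ({i, i + c1, j} : Finset (Fin n)))) with hB
  -- A has card n
  have hcardA : A.card = n := by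
    rw [hA, Finset.card_image_of_injOn, Finset.card_univ, Fintype.card_fin]
    intro x _ y _ h
    simp only at h
    have hy : y ∈ ({x, x + c1, x + c2} : Finset (Fin n)) := by rw [h]; simp
    have hx : x ∈ ({y, y + c1, y + c2} : Finset (Fin n)) := by rw [← h]; simp
    simp only [Finset.mem_insert, Finset.mem_singleton] at hy hx
    rcases hy with rfl | rfl | rfl
    · rfl
    · -- y = x + c1 : x ∈ {x+c1, x+c1+c1, x+c1+c2}
      exfalso
      rcases hx with h' | h' | h'
      · exact shift_ne0 (a := 1) (by omega) (by omega) h'.symm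
      · rw [hc12] at h'
        exact shift_ne0 (a := 2) (by omega) (by omega) h'.symm
      · rw [add_assoc, hc1, hc2, cast_sum_eq] at h'
        exact shift_ne0 (a := 3) (by omega) (by omega) h'.symm
    · exfalso
      rcases hx with h' | h' | h'
      · exact shift_ne0 (a := 2) (by omega) (by omega) h'.symm
      · rw [add_assoc, hc2, hc1, cast_sum_eq] at h'
        exact shift_ne0 (a := 3) (by omega) (by omega) h'.symm
      · rw [add_assoc, hc2, cast_sum_eq] at h'
        exact shift_ne0 (a := 4) (by omega) (by omega) h'.symm
  -- uniqueness of representation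
  have pair_eq : ∀ i i' j j' : Fin n,
      (j ≠ i ∧ j ≠ i + c1 ∧ j ≠ i + c2 ∧ j + c1 ≠ i) →
      (j' ≠ i' ∧ j' ≠ i' + c1 ∧ j' ≠ i' + c2 ∧ j' + c1 ≠ i') →
      ({i, i + c1, j} : Finset (Fin n)) = {i', i' + c1, j'} → i = i' ∧ j = j' := by
    intro i i' j j' hj hj' h
    have hi' : i' ∈ ({i, i + c1, j} : Finset (Fin n)) := by rw [h]; simp
    simp only [Finset.mem_insert, Finset.mem_singleton] at hi'
    rcases hi' with h' | h' | h'
    · refine ⟨h'.symm, ?_⟩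
      have hjj : j' ∈ ({i, i + c1, j} : Finset (Fin n)) := by rw [h]; simp
      simp only [Finset.mem_insert, Finset.mem_singleton] at hjj
      rcases hjj with h1 | h1 | h1
      · exact absurd (h1.trans h'.symm) hj'.1
      · exact absurd (by rw [h1, h'] : j' = i' + c1) hj'.2.1
      · exact h1.symm
    · exfalso
      have hm : i' + c1 ∈ ({i, i + c1, j} : Finset (Fin n)) := by rw [h]; simp
      rw [h', hc12] at hm
      simp only [Finset.mem_insert, Finset.mem_singleton] at hm
      rcases hm with hm | hm | hm
      · exact shift_ne0 (a := 2) (by omega) (by omega) hm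
      · exact shift_ne (a := 2) (b := 1) (by omega) (by omega) (by omega) hm
      · exact hj.2.2.1 hm.symm
    · exfalso
      have hm : i' + c1 ∈ ({i, i + c1, j} : Finset (Fin n)) := by rw [h]; simp
      rw [h'] at hm
      simp only [Finset.mem_insert, Finset.mem_singleton] at hm
      rcases hm with hm | hm | hm
      · exact hj.2.2.2 hm
      · exact hj.1 (add_right_cancel hm)
      · exact shift_ne0 (a := 1) (i := j) (by omega) (by omega) hm
  -- B has card n * (n - 4)
  have hcardB : B.card = n * (n - 4) := by
    rw [hB, Finset.card_biUnion]
    · have hinner : ∀ i : Fin n,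
          (((univ.filter fun j : Fin n =>
            j ≠ i ∧ j ≠ i + c1 ∧ j ≠ i + c2 ∧ j + c1 ≠ i)).image
              (fun j => ({i, i + c1, j} : Finset (Fin n)))).card = n - 4 := by
        intro i
        rw [Finset.card_image_of_injOn]
        · have hset : (univ.filter fun j : Fin n =>
              j ≠ i ∧ j ≠ i + c1 ∧ j ≠ i + c2 ∧ j + c1 ≠ i)
              = univ \ {i, i + c1, i + c2, i + ((n - 1 : ℕ) : Fin n)} := by
            have hc1iff : ∀ j : Fin n, (j + c1 = i) ↔ (j = i + ((n - 1 : ℕ) : Fin n)) := by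
              intro j
              rw [hc1]
              exact succ_eq_iff (by omega)
            ext j
            simp only [Finset.mem_filter, Finset.mem_univ, true_and, Finset.mem_sdiff,
              Finset.mem_insert, Finset.mem_singleton, Ne, hc1iff]
            tauto
          rw [hset, Finset.card_sdiff_of_subset (Finset.subset_univ _), Finset.card_univ,
            Fintype.card_fin]
          have h4 : ({i, i + c1, i + c2, i + ((n - 1 : ℕ) : Fin n)} :
              Finset (Fin n)).card = 4 := by
            rw [Finset.card_insert_of_notMem, Finset.card_insert_of_notMem,
              Finset.card_insert_of_notMem, Finset.card_singleton]
            · simp only [Finset.mem_singleton]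
              exact shift_ne (a := 2) (b := n - 1) (by omega) (by omega) (by omega)
            · simp only [Finset.mem_insert, Finset.mem_singleton]
              push_neg
              exact ⟨shift_ne (a := 1) (b := 2) (by omega) (by omega) (by omega),
                shift_ne (a := 1) (b := n - 1) (by omega) (by omega) (by omega)⟩
            · simp only [Finset.mem_insert, Finset.mem_singleton]
              push_neg
              exact ⟨(shift_ne0 (a := 1) (by omega) (by omega)).symm,
                (shift_ne0 (a := 2) (by omega) (by omega)).symm,
                (shift_ne0 (a := n - 1) (by omega) (by omega)).symm⟩
          rw [h4]
        · intro x hx y hy hxy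
          simp only [Finset.coe_filter, Finset.mem_univ, true_and, Set.mem_setOf_eq] at hx hy
          simp only at hxy
          exact (pair_eq i i x y hx hy hxy).2
      rw [Finset.sum_congr rfl (fun i _ => hinner i), Finset.sum_const, Finset.card_univ,
        Fintype.card_fin, smul_eq_mul]
    · intro x _ y _ hxy
      rw [Function.onFun, Finset.disjoint_left]
      intro t ht ht'
      simp only [Finset.mem_image, Finset.mem_filter, Finset.mem_univ, true_and] at ht ht'
      obtain ⟨j, hjc, rfl⟩ := ht
      obtain ⟨j', hjc', heq⟩ := ht'
      exact hxy (pair_eq x y j j' hjc hjc' heq.symm).1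
  -- A and B are disjoint
  have hdisj : Disjoint A B := by
    rw [Finset.disjoint_left]
    intro t htA htB
    rw [hA] at htA
    rw [hB] at htB
    simp only [Finset.mem_image, Finset.mem_univ, true_and] at htA
    simp only [Finset.mem_biUnion, Finset.mem_image, Finset.mem_filter, Finset.mem_univ,
      true_and] at htB
    obtain ⟨x, rfl⟩ := htA
    obtain ⟨i, j, hjc, heq⟩ := htB
    have hi : i ∈ ({x, x + c1, x + c2} : Finset (Fin n)) := by rw [← heq]; simp
    simp only [Finset.mem_insert, Finset.mem_singleton] at hi
    rcases hi with rfl | rfl | rfl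
    · have hjm : j ∈ ({i, i + c1, i + c2} : Finset (Fin n)) := by rw [← heq]; simp
      simp only [Finset.mem_insert, Finset.mem_singleton] at hjm
      rcases hjm with hjm | hjm | hjm
      · exact hjc.1 hjm
      · exact hjc.2.1 hjm
      · exact hjc.2.2.1 hjm
    · have hxm : x ∈ ({x + c1, x + c1 + c1, j} : Finset (Fin n)) := by rw [heq]; simp
      rw [hc12] at hxm
      simp only [Finset.mem_insert, Finset.mem_singleton] at hxm
      rcases hxm with hxm | hxm | hxm
      · exact shift_ne0 (a := 1) (by omega) (by omega) hxm.symm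
      · exact shift_ne0 (a := 2) (by omega) (by omega) hxm.symm
      · exact hjc.2.2.2 (by rw [← hxm])
    · have hm : x + c2 + c1 ∈ ({x, x + c1, x + c2} : Finset (Fin n)) := by rw [← heq]; simp
      rw [hc21] at hm
      simp only [Finset.mem_insert, Finset.mem_singleton] at hm
      rcases hm with hm | hm | hm
      · exact shift_ne0 (a := 3) (by omega) (by omega) hm
      · exact shift_ne (a := 3) (b := 1) (by omega) (by omega) (by omega) hm
      · exact shift_ne (a := 3) (b := 2) (by omega) (by omega) (by omega) hm
  -- A ∪ B ⊆ H
  have hsub : A ∪ B ⊆ H := by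
    intro t ht
    rw [Finset.mem_union] at ht
    rcases ht with ht | ht
    · rw [hA] at ht
      simp only [Finset.mem_image, Finset.mem_univ, true_and] at ht
      obtain ⟨x, rfl⟩ := ht
      exact sat_mem hn H hsat x (x + c2)
        (shift_ne0 (a := 2) (by omega) (by omega))
        (shift_ne (a := 2) (b := 1) (by omega) (by omega) (by omega))
    · rw [hB] at ht
      simp only [Finset.mem_biUnion, Finset.mem_image, Finset.mem_filter, Finset.mem_univ,
        true_and] at ht
      obtain ⟨i, j, hjc, rfl⟩ := ht
      exact sat_mem hn H hsat i j hjc.1 hjc.2.1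
  have hfin : (A ∪ B).card = n + n * (n - 4) := by
    rw [Finset.card_union_of_disjoint hdisj, hcardA, hcardB]
  calc n * (n - 3) = n + n * (n - 4) := by
        rw [show n - 3 = (n - 4) + 1 by omega, mul_add, mul_one, add_comm]
  _ = (A ∪ B).card := hfin.symm
  _ ≤ H.card := Finset.card_le_card hsub
end

lemma exists_sat (n : ℕ) : ∃ H : Finset (Finset (Fin n)), IsSat M3cgh 3 H := by
  classical
  let S : Finset (Finset (Finset (Fin n))) :=
    univ.filter (fun H => (∀ h ∈ H, h.card = 3) ∧ ¬ HasCopy M3cgh H)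
  have hS : (∅ : Finset (Finset (Fin n))) ∈ S := by
    simp only [S, Finset.mem_filter, Finset.mem_univ, true_and]
    refine ⟨by simp, ?_⟩
    rintro ⟨f, -, -, hmem⟩
    have := hmem ({0,2,4} : Finset (Fin 6)) (Finset.mem_insert_self _ _)
    simp at this
  obtain ⟨H, hH, hmax⟩ := S.exists_max_image Finset.card ⟨∅, hS⟩
  simp only [S, Finset.mem_filter, Finset.mem_univ, true_and] at hH
  refine ⟨H, hH.1, hH.2, ?_⟩
  intro e hce hne
  by_contra hnc
  have hmem : insert e H ∈ S := by
    simp only [S, Finset.mem_filter, Finset.mem_univ, true_and]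
    refine ⟨?_, hnc⟩
    intro h hh
    rcases Finset.mem_insert.mp hh with rfl | hh
    · exact hce
    · exact hH.1 h hh
  have := hmax _ hmem
  rw [Finset.card_insert_of_notMem hne] at this
  omega

end AuxM3

-- STATEMENT 9
theorem sat_M3_lower (n : ℕ) (hn : 6 ≤ n) :
    (∀ H : Finset (Finset (Fin n)), IsSat M3cgh 3 H →
      ∀ i j : Fin n, j ≠ i → j ≠ i + ⟨1, by omega⟩ →
        ({i, i + ⟨1, by omega⟩, j} : Finset (Fin n)) ∈ H) ∧
    n * (n - 3) ≤ satNum M3cgh 3 n := by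
  haveI : NeZero n := ⟨by omega⟩
  open Fin.NatCast in
  have hone : (⟨1, by omega⟩ : Fin n) = ((1:ℕ) : Fin n) := by
    apply Fin.ext
    rw [Fin.val_cast_of_lt (show 1 < n by omega)]
  constructor
  · intro H hsat i j hj1 hj2
    rw [hone]
    exact sat_mem hn H hsat i j hj1 (by rwa [hone] at hj2)
  · obtain ⟨H₀, hH₀⟩ := exists_sat n
    have hne : {k | ∃ H : Finset (Finset (Fin n)), IsSat M3cgh 3 H ∧ H.card = k}.Nonempty :=
      ⟨H₀.card, H₀, hH₀, rfl⟩
    obtain ⟨H, hH, hcard⟩ := Nat.sInf_mem hne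
    rw [satNum, ← hcard]
    exact card_bound hn H hH
end

section
/- For every n ≥ 5: every 3-element subset of Ω_n forms a copy of D_1 with exactly n−3 other 3-element subsets and a copy of D_2 with exactly 2(n−3) other 3-element subsets; consequently sat_○(n, D_1) ≥ n(n−1)/6 and sat_○(n, D_2) ≥ n(n−1)(n−2)/(6(2n−5)). -/
open Finset

section AuxSat

variable {n : ℕ}

lemma triple_eq {a b c x y z : Fin n} (h1 : a < b) (h2 : b < c) (h3 : x < y) (h4 : y < z)
    (he : ({a,b,c} : Finset (Fin n)) = {x,y,z}) : a = x ∧ b = y ∧ c = z := by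
  have ma : a = x ∨ a = y ∨ a = z := by
    have : a ∈ ({x,y,z} : Finset (Fin n)) := he ▸ (by simp)
    simpa using this
  have mb : b = x ∨ b = y ∨ b = z := by
    have : b ∈ ({x,y,z} : Finset (Fin n)) := he ▸ (by simp)
    simpa using this
  have mc : c = x ∨ c = y ∨ c = z := by
    have : c ∈ ({x,y,z} : Finset (Fin n)) := he ▸ (by simp)
    simpa using this
  have mx : x = a ∨ x = b ∨ x = c := by
    have : x ∈ ({a,b,c} : Finset (Fin n)) := he.symm ▸ (by simp)
    simpa using this
  simp only [Fin.lt_def] at h1 h2 h3 h4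
  simp only [Fin.ext_iff] at ma mb mc mx ⊢
  omega

lemma card_eq_three_sorted {e : Finset (Fin n)} (he : e.card = 3) :
    ∃ a b c : Fin n, a < b ∧ b < c ∧ e = {a, b, c} := by
  obtain ⟨x, y, z, hxy, hxz, hyz, rfl⟩ := Finset.card_eq_three.mp he
  have pe : ∀ u v w : Fin n, ({u,v,w} : Finset (Fin n)) = {x,y,z} →
      (∃ a b c : Fin n, a < b ∧ b < c ∧ ({x,y,z} : Finset (Fin n)) = {a,b,c}) → True := fun _ _ _ _ _ => trivial
  rcases lt_trichotomy x y with h|h|h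
  · rcases lt_trichotomy y z with h'|h'|h'
    · exact ⟨x, y, z, h, h', rfl⟩
    · exact absurd h' hyz
    · rcases lt_trichotomy x z with h''|h''|h''
      · exact ⟨x, z, y, h'', h', by ext t; simp; tauto⟩
      · exact absurd h'' hxz
      · exact ⟨z, x, y, h'', h, by ext t; simp; tauto⟩
  · exact absurd h hxy
  · rcases lt_trichotomy x z with h'|h'|h'
    · exact ⟨y, x, z, h, h', by ext t; simp; tauto⟩
    · exact absurd h' hxz
    · rcases lt_trichotomy y z with h''|h''|h''
      · exact ⟨y, z, x, h'', h', by ext t; simp; tauto⟩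
      · exact absurd h'' hyz
      · exact ⟨z, y, x, h'', h, by ext t; simp; tauto⟩

lemma copyD1 {H : Finset (Finset (Fin n))} (g0 g1 g2 g3 : Fin n)
    (h01 : g0 ≠ g1) (h02 : g0 ≠ g2) (h03 : g0 ≠ g3) (h12 : g1 ≠ g2) (h13 : g1 ≠ g3) (h23 : g2 ≠ g3)
    (hcyc : CyclicSorted [g0,g1,g2,g3])
    (he1 : ({g0,g1,g2} : Finset (Fin n)) ∈ H) (he2 : ({g0,g2,g3} : Finset (Fin n)) ∈ H) :
    HasCopy D1cgh H := by
  refine ⟨![g0,g1,g2,g3], ?_, ?_, ?_⟩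
  · show Function.Injective (![g0,g1,g2,g3] : Fin 4 → Fin n)
    intro i j hij
    fin_cases i <;> fin_cases j <;> simp_all [Matrix.cons_val]
  · exact hcyc
  · show ∀ e : Finset (Fin 4), e ∈ ({({0,1,2} : Finset (Fin 4)), ({0,2,3} : Finset (Fin 4))} : Finset (Finset (Fin 4))) → e.image ![g0,g1,g2,g3] ∈ H
    intro e he
    simp only [D1cgh, Finset.mem_insert, Finset.mem_singleton] at he
    rcases he with rfl|rfl
    · simpa [Finset.image_insert] using he1
    · simpa [Finset.image_insert] using he2


/-- replacement triple for `D1`. -/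
def phiD1 (a b c z : Fin n) : Finset (Fin n) :=
  if z < a ∨ c < z then {a,c,z} else if z < b then {a,b,z} else {b,c,z}

/-- first replacement triple for `D2`. -/
def phi1 (a b c z : Fin n) : Finset (Fin n) :=
  if z < a ∨ c < z then {a,b,z} else if z < b then {b,c,z} else {a,c,z}

/-- second replacement triple for `D2`. -/
def phi2 (a b c z : Fin n) : Finset (Fin n) :=
  if z < a ∨ c < z then {b,c,z} else if z < b then {a,c,z} else {a,b,z}

lemma card3 {x y z : Fin n} (h1 : x ≠ y) (h2 : x ≠ z) (h3 : y ≠ z) :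
    ({x,y,z} : Finset (Fin n)).card = 3 :=
  Finset.card_eq_three.mpr ⟨x, y, z, h1, h2, h3, rfl⟩

lemma phi_spec {a b c z : Fin n} (hab : a < b) (hbc : b < c)
    (hz : z ∉ ({a,b,c} : Finset (Fin n))) (φ : Finset (Fin n))
    (hφ : φ = phiD1 a b c z ∨ φ = phi1 a b c z ∨ φ = phi2 a b c z) :
    z ∈ φ ∧ φ ⊆ insert z {a,b,c} ∧ φ.card = 3 := by
  simp only [Finset.mem_insert, Finset.mem_singleton, not_or] at hz
  obtain ⟨hza, hzb, hzc⟩ := hz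
  have hac : a ≠ c := ne_of_lt (hab.trans hbc)
  rcases hφ with rfl|rfl|rfl <;>
    · simp only [phiD1, phi1, phi2]
      split_ifs <;>
        exact ⟨by simp, by intro t ht; simp at ht ⊢; tauto,
          card3 (by first | exact hab.ne | exact hbc.ne | exact hac)
            (by first | exact Ne.symm hza | exact Ne.symm hzb | exact Ne.symm hzc)
            (by first | exact Ne.symm hza | exact Ne.symm hzb | exact Ne.symm hzc)⟩

lemma perm3 {x y z : Fin n} : ({x,y,z} : Finset (Fin n)) = {y,z,x} := by ext t; simp; tauto
lemma swap3 {x y z : Fin n} : ({x,y,z} : Finset (Fin n)) = {y,x,z} := by ext t; simp; tauto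

set_option maxHeartbeats 2000000 in
lemma hasCopy_D1_iff {a b c : Fin n} (hab : a < b) (hbc : b < c) (f : Finset (Fin n)) :
    (f.card = 3 ∧ HasCopy D1cgh ({{a,b,c}, f} : Finset (Finset (Fin n)))) ↔
      ∃ z, z ∉ ({a,b,c} : Finset (Fin n)) ∧ f = phiD1 a b c z := by
  have hac : a < c := hab.trans hbc
  constructor
  · rintro ⟨hcard, hcopy⟩
    obtain ⟨g, hinj, hcyc, him⟩ :
        ∃ g : Fin 4 → Fin n, Function.Injective g ∧ CyclicSorted (List.ofFn g) ∧
          ∀ e : Finset (Fin 4), e ∈ ({({0,1,2} : Finset (Fin 4)), ({0,2,3} : Finset (Fin 4))} : Finset (Finset (Fin 4))) →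
            Finset.image g e ∈ ({({a,b,c} : Finset (Fin n)), f} : Finset (Finset (Fin n))) := hcopy
    have d01 : g 0 ≠ g 1 := fun h => absurd (hinj h) (by decide)
    have d02 : g 0 ≠ g 2 := fun h => absurd (hinj h) (by decide)
    have d03 : g 0 ≠ g 3 := fun h => absurd (hinj h) (by decide)
    have d12 : g 1 ≠ g 2 := fun h => absurd (hinj h) (by decide)
    have d13 : g 1 ≠ g 3 := fun h => absurd (hinj h) (by decide)
    have d23 : g 2 ≠ g 3 := fun h => absurd (hinj h) (by decide)
    have h1 : ({g 0, g 1, g 2} : Finset (Fin n)) ∈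
        ({({a,b,c} : Finset (Fin n)), f} : Finset (Finset (Fin n))) := by
      simpa [Finset.image_insert] using him {0,1,2} (by simp [D1cgh])
    have h2 : ({g 0, g 2, g 3} : Finset (Fin n)) ∈
        ({({a,b,c} : Finset (Fin n)), f} : Finset (Finset (Fin n))) := by
      simpa [Finset.image_insert] using him {0,2,3} (by simp [D1cgh])
    have hI : ({g 0, g 1, g 2} : Finset (Fin n)) ≠ {g 0, g 2, g 3} := by
      intro h
      have h' : g 1 ∈ ({g 0, g 2, g 3} : Finset (Fin n)) := h ▸ (by simp)
      simp only [Finset.mem_insert, Finset.mem_singleton] at h'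
      rcases h' with h'|h'|h'
      exacts [d01 h'.symm, d12 h', d13 h']
    simp only [Finset.mem_insert, Finset.mem_singleton] at h1 h2
    rw [show List.ofFn g = [g 0, g 1, g 2, g 3] by simp [List.ofFn_succ]] at hcyc
    obtain ⟨k, hk⟩ := hcyc
    rw [← List.rotate_mod] at hk
    rw [show ([g 0, g 1, g 2, g 3] : List (Fin n)).length = 4 from rfl] at hk
    have hlt : k % 4 < 4 := Nat.mod_lt _ (by norm_num)
    set r := k % 4 with hr
    clear_value r
    rcases h1 with h1|h1
    · -- {g0,g1,g2} = e, so {g0,g2,g3} = f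
      have h2' : ({g 0, g 2, g 3} : Finset (Fin n)) = f := by
        rcases h2 with h2|h2
        · exact absurd (h1.trans h2.symm) hI
        · exact h2
      interval_cases r
      · replace hk : ([g 0, g 1, g 2, g 3] : List (Fin n)).Chain' (· < ·) := hk
        simp only [List.Chain', List.isChain_cons_cons, List.isChain_singleton, and_true] at hk
        obtain ⟨o1, o2, o3⟩ := hk
        obtain ⟨rfl, rfl, rfl⟩ := triple_eq o1 o2 hab hbc h1
        refine ⟨g 3, by simp [Ne.symm d03, Ne.symm d13, Ne.symm d23], ?_⟩
        rw [phiD1, if_pos (Or.inr o3)]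
        exact h2'.symm
      · replace hk : ([g 1, g 2, g 3, g 0] : List (Fin n)).Chain' (· < ·) := hk
        simp only [List.Chain', List.isChain_cons_cons, List.isChain_singleton, and_true] at hk
        obtain ⟨o1, o2, o3⟩ := hk
        obtain ⟨rfl, rfl, rfl⟩ := triple_eq o1 (o2.trans o3) hab hbc (perm3.symm.trans h1)
        -- a = g1, b = g2, c = g0, z = g3 ∈ (b,c)
        refine ⟨g 3, by simp [Ne.symm d03, Ne.symm d13, Ne.symm d23], ?_⟩
        rw [phiD1, if_neg (by push_neg; exact ⟨(o1.trans o2).le, o3.le⟩),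
          if_neg (by push_neg; exact o2.le)]
        rw [← h2']
        ext t; simp; tauto
      · replace hk : ([g 2, g 3, g 0, g 1] : List (Fin n)).Chain' (· < ·) := hk
        simp only [List.Chain', List.isChain_cons_cons, List.isChain_singleton, and_true] at hk
        obtain ⟨o1, o2, o3⟩ := hk
        obtain ⟨rfl, rfl, rfl⟩ := triple_eq (o1.trans o2) o3 hab hbc (perm3.trans h1)
        -- a = g2, b = g0, c = g1, z = g3 ∈ (a,b)
        refine ⟨g 3, by simp [Ne.symm d03, Ne.symm d13, Ne.symm d23], ?_⟩
        rw [phiD1, if_neg (by push_neg; exact ⟨o1.le, (o2.trans o3).le⟩),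
          if_pos o2]
        rw [← h2']
        ext t; simp; tauto
      · replace hk : ([g 3, g 0, g 1, g 2] : List (Fin n)).Chain' (· < ·) := hk
        simp only [List.Chain', List.isChain_cons_cons, List.isChain_singleton, and_true] at hk
        obtain ⟨o1, o2, o3⟩ := hk
        obtain ⟨rfl, rfl, rfl⟩ := triple_eq o2 o3 hab hbc h1
        -- z = g3 < a = g0
        refine ⟨g 3, by simp [Ne.symm d03, Ne.symm d13, Ne.symm d23], ?_⟩
        rw [phiD1, if_pos (Or.inl o1)]
        exact h2'.symm
    · -- {g0,g1,g2} = f, so {g0,g2,g3} = e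
      have h2' : ({g 0, g 2, g 3} : Finset (Fin n)) = {a,b,c} := by
        rcases h2 with h2|h2
        · exact h2
        · exact absurd (h1.trans h2.symm) hI
      interval_cases r
      · replace hk : ([g 0, g 1, g 2, g 3] : List (Fin n)).Chain' (· < ·) := hk
        simp only [List.Chain', List.isChain_cons_cons, List.isChain_singleton, and_true] at hk
        obtain ⟨o1, o2, o3⟩ := hk
        obtain ⟨rfl, rfl, rfl⟩ := triple_eq (o1.trans o2) o3 hab hbc h2'
        -- a = g0, b = g2, c = g3, z = g1 ∈ (a,b)
        refine ⟨g 1, by simp [Ne.symm d01, d12, d13], ?_⟩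
        rw [phiD1, if_neg (by push_neg; exact ⟨o1.le, (o2.trans o3).le⟩), if_pos o2]
        rw [← h1]
        ext t; simp; tauto
      · replace hk : ([g 1, g 2, g 3, g 0] : List (Fin n)).Chain' (· < ·) := hk
        simp only [List.Chain', List.isChain_cons_cons, List.isChain_singleton, and_true] at hk
        obtain ⟨o1, o2, o3⟩ := hk
        have he : ({g 2, g 3, g 0} : Finset (Fin n)) = {a,b,c} := by
          rw [← h2']; ext t; simp; tauto
        obtain ⟨rfl, rfl, rfl⟩ := triple_eq o2 o3 hab hbc he
        -- a = g2, b = g3, c = g0, z = g1 < a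
        refine ⟨g 1, by simp [Ne.symm d01, d12, d13], ?_⟩
        rw [phiD1, if_pos (Or.inl o1)]
        rw [← h1]
        ext t; simp; tauto
      · replace hk : ([g 2, g 3, g 0, g 1] : List (Fin n)).Chain' (· < ·) := hk
        simp only [List.Chain', List.isChain_cons_cons, List.isChain_singleton, and_true] at hk
        obtain ⟨o1, o2, o3⟩ := hk
        have he : ({g 2, g 3, g 0} : Finset (Fin n)) = {a,b,c} := by
          rw [← h2']; ext t; simp; tauto
        obtain ⟨rfl, rfl, rfl⟩ := triple_eq o1 o2 hab hbc he
        -- a = g2, b = g3, c = g0, z = g1 > c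
        refine ⟨g 1, by simp [Ne.symm d01, d12, d13], ?_⟩
        rw [phiD1, if_pos (Or.inr o3)]
        rw [← h1]
        ext t; simp; tauto
      · replace hk : ([g 3, g 0, g 1, g 2] : List (Fin n)).Chain' (· < ·) := hk
        simp only [List.Chain', List.isChain_cons_cons, List.isChain_singleton, and_true] at hk
        obtain ⟨o1, o2, o3⟩ := hk
        have he : ({g 3, g 0, g 2} : Finset (Fin n)) = {a,b,c} := by
          rw [← h2']; ext t; simp; tauto
        obtain ⟨rfl, rfl, rfl⟩ := triple_eq o1 (o2.trans o3) hab hbc he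
        -- a = g3, b = g0, c = g2, z = g1 ∈ (b,c)
        refine ⟨g 1, by simp [Ne.symm d01, d12, d13], ?_⟩
        rw [phiD1, if_neg (by push_neg; exact ⟨(o1.trans o2).le, o3.le⟩),
          if_neg (by push_neg; exact o2.le)]
        rw [← h1]
        ext t; simp; tauto
  · rintro ⟨z, hz, rfl⟩
    have hz' := hz
    simp only [Finset.mem_insert, Finset.mem_singleton, not_or] at hz'
    obtain ⟨hza, hzb, hzc⟩ := hz'
    refine ⟨(phi_spec hab hbc hz _ (Or.inl rfl)).2.2, ?_⟩
    by_cases hc1 : z < a ∨ c < z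
    · have hφ : phiD1 a b c z = {a,c,z} := by rw [phiD1, if_pos hc1]
      rw [hφ]
      refine copyD1 a b c z hab.ne hac.ne (Ne.symm hza) hbc.ne (Ne.symm hzb) (Ne.symm hzc)
        ?_ (by simp) (by simp)
      rcases hc1 with h|h
      · refine ⟨3, ?_⟩
        show ([z,a,b,c] : List (Fin n)).Chain' (· < ·)
        simp only [List.Chain', List.isChain_cons_cons, List.isChain_singleton, and_true]
        exact ⟨h, hab, hbc⟩
      · refine ⟨0, ?_⟩
        show ([a,b,c,z] : List (Fin n)).Chain' (· < ·)
        simp only [List.Chain', List.isChain_cons_cons, List.isChain_singleton, and_true]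
        exact ⟨hab, hbc, h⟩
    · push_neg at hc1
      obtain ⟨haz, hzc2⟩ := hc1
      have haz' : a < z := lt_of_le_of_ne haz (Ne.symm hza)
      have hzc' : z < c := lt_of_le_of_ne hzc2 hzc
      by_cases hc2 : z < b
      · have hφ : phiD1 a b c z = {a,b,z} := by
          rw [phiD1, if_neg (by push_neg; exact ⟨haz, hzc2⟩), if_pos hc2]
        rw [hφ]
        refine copyD1 b c a z ?_ ?_ ?_ ?_ ?_ ?_ ?_ ?_ ?_
        · exact hbc.ne
        · exact Ne.symm hab.ne
        · exact fun h => hzb (h.symm)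
        · exact Ne.symm hac.ne
        · exact Ne.symm hzc
        · exact fun h => hza h.symm
        · refine ⟨2, ?_⟩
          show ([a,z,b,c] : List (Fin n)).Chain' (· < ·)
          simp only [List.Chain', List.isChain_cons_cons, List.isChain_singleton, and_true]
          exact ⟨haz', hc2, hbc⟩
        · show ({b,c,a} : Finset (Fin n)) ∈ _
          have : ({b,c,a} : Finset (Fin n)) = {a,b,c} := by ext t; simp; tauto
          rw [this]; simp
        · show ({b,a,z} : Finset (Fin n)) ∈ _
          have : ({b,a,z} : Finset (Fin n)) = {a,b,z} := by ext t; simp; tauto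
          rw [this]; simp
      · push_neg at hc2
        have hbz : b < z := lt_of_le_of_ne hc2 (Ne.symm hzb)
        have hφ : phiD1 a b c z = {b,c,z} := by
          rw [phiD1, if_neg (by push_neg; exact ⟨haz, hzc2⟩), if_neg (not_lt.mpr hc2)]
        rw [hφ]
        refine copyD1 c a b z ?_ ?_ ?_ ?_ ?_ ?_ ?_ ?_ ?_
        · exact Ne.symm hac.ne
        · exact Ne.symm hbc.ne
        · exact Ne.symm hzc
        · exact hab.ne
        · exact fun h => hza h.symm
        · exact fun h => hzb h.symm
        · refine ⟨1, ?_⟩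
          show ([a,b,z,c] : List (Fin n)).Chain' (· < ·)
          simp only [List.Chain', List.isChain_cons_cons, List.isChain_singleton, and_true]
          exact ⟨hab, hbz, hzc'⟩
        · show ({c,a,b} : Finset (Fin n)) ∈ _
          have : ({c,a,b} : Finset (Fin n)) = {a,b,c} := by ext t; simp; tauto
          rw [this]; simp
        · show ({c,b,z} : Finset (Fin n)) ∈ _
          have : ({c,b,z} : Finset (Fin n)) = {b,c,z} := by ext t; simp; tauto
          rw [this]; simp

lemma copyD2 {H : Finset (Finset (Fin n))} (g0 g1 g2 g3 : Fin n)
    (h01 : g0 ≠ g1) (h02 : g0 ≠ g2) (h03 : g0 ≠ g3) (h12 : g1 ≠ g2) (h13 : g1 ≠ g3) (h23 : g2 ≠ g3)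
    (hcyc : CyclicSorted [g0,g1,g2,g3])
    (he1 : ({g0,g1,g2} : Finset (Fin n)) ∈ H) (he2 : ({g0,g1,g3} : Finset (Fin n)) ∈ H) :
    HasCopy D2cgh H := by
  refine ⟨![g0,g1,g2,g3], ?_, ?_, ?_⟩
  · show Function.Injective (![g0,g1,g2,g3] : Fin 4 → Fin n)
    intro i j hij
    fin_cases i <;> fin_cases j <;> simp_all [Matrix.cons_val]
  · exact hcyc
  · show ∀ e : Finset (Fin 4), e ∈ ({({0,1,2} : Finset (Fin 4)), ({0,1,3} : Finset (Fin 4))} : Finset (Finset (Fin 4))) → e.image ![g0,g1,g2,g3] ∈ H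
    intro e he
    simp only [D2cgh, Finset.mem_insert, Finset.mem_singleton] at he
    rcases he with rfl|rfl
    · simpa [Finset.image_insert] using he1
    · simpa [Finset.image_insert] using he2

set_option maxHeartbeats 2000000 in
lemma hasCopy_D2_iff {a b c : Fin n} (hab : a < b) (hbc : b < c) (f : Finset (Fin n)) :
    (f.card = 3 ∧ HasCopy D2cgh ({{a,b,c}, f} : Finset (Finset (Fin n)))) ↔
      ∃ z, z ∉ ({a,b,c} : Finset (Fin n)) ∧ (f = phi1 a b c z ∨ f = phi2 a b c z) := by
  have hac : a < c := hab.trans hbc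
  constructor
  · rintro ⟨hcard, hcopy⟩
    obtain ⟨g, hinj, hcyc, him⟩ :
        ∃ g : Fin 4 → Fin n, Function.Injective g ∧ CyclicSorted (List.ofFn g) ∧
          ∀ e : Finset (Fin 4), e ∈ ({({0,1,2} : Finset (Fin 4)), ({0,1,3} : Finset (Fin 4))} : Finset (Finset (Fin 4))) →
            Finset.image g e ∈ ({({a,b,c} : Finset (Fin n)), f} : Finset (Finset (Fin n))) := hcopy
    have d01 : g 0 ≠ g 1 := fun h => absurd (hinj h) (by decide)
    have d02 : g 0 ≠ g 2 := fun h => absurd (hinj h) (by decide)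
    have d03 : g 0 ≠ g 3 := fun h => absurd (hinj h) (by decide)
    have d12 : g 1 ≠ g 2 := fun h => absurd (hinj h) (by decide)
    have d13 : g 1 ≠ g 3 := fun h => absurd (hinj h) (by decide)
    have d23 : g 2 ≠ g 3 := fun h => absurd (hinj h) (by decide)
    have h1 : ({g 0, g 1, g 2} : Finset (Fin n)) ∈
        ({({a,b,c} : Finset (Fin n)), f} : Finset (Finset (Fin n))) := by
      simpa [Finset.image_insert] using him {0,1,2} (by simp [D2cgh])
    have h2 : ({g 0, g 1, g 3} : Finset (Fin n)) ∈
        ({({a,b,c} : Finset (Fin n)), f} : Finset (Finset (Fin n))) := by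
      simpa [Finset.image_insert] using him {0,1,3} (by simp [D2cgh])
    have hI : ({g 0, g 1, g 2} : Finset (Fin n)) ≠ {g 0, g 1, g 3} := by
      intro h
      have h' : g 2 ∈ ({g 0, g 1, g 3} : Finset (Fin n)) := h ▸ (by simp)
      simp only [Finset.mem_insert, Finset.mem_singleton] at h'
      rcases h' with h'|h'|h'
      exacts [d02 h'.symm, d12 h'.symm, d23 h']
    simp only [Finset.mem_insert, Finset.mem_singleton] at h1 h2
    rw [show List.ofFn g = [g 0, g 1, g 2, g 3] by simp [List.ofFn_succ]] at hcyc
    obtain ⟨k, hk⟩ := hcyc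
    rw [← List.rotate_mod] at hk
    rw [show ([g 0, g 1, g 2, g 3] : List (Fin n)).length = 4 from rfl] at hk
    have hlt : k % 4 < 4 := Nat.mod_lt _ (by norm_num)
    set r := k % 4 with hr
    clear_value r
    rcases h1 with h1|h1
    · -- e = {g0,g1,g2}, f = {g0,g1,g3}, z = g3, phi1
      have h2' : ({g 0, g 1, g 3} : Finset (Fin n)) = f := by
        rcases h2 with h2|h2
        · exact absurd (h1.trans h2.symm) hI
        · exact h2
      interval_cases r
      · replace hk : ([g 0, g 1, g 2, g 3] : List (Fin n)).Chain' (· < ·) := hk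
        simp only [List.Chain', List.isChain_cons_cons, List.isChain_singleton, and_true] at hk
        obtain ⟨o1, o2, o3⟩ := hk
        obtain ⟨rfl, rfl, rfl⟩ := triple_eq o1 o2 hab hbc h1
        refine ⟨g 3, by simp [Ne.symm d03, Ne.symm d13, Ne.symm d23], Or.inl ?_⟩
        rw [phi1, if_pos (Or.inr o3)]
        exact h2'.symm
      · replace hk : ([g 1, g 2, g 3, g 0] : List (Fin n)).Chain' (· < ·) := hk
        simp only [List.Chain', List.isChain_cons_cons, List.isChain_singleton, and_true] at hk
        obtain ⟨o1, o2, o3⟩ := hk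
        obtain ⟨rfl, rfl, rfl⟩ := triple_eq o1 (o2.trans o3) hab hbc (perm3.symm.trans h1)
        -- a = g1, b = g2, c = g0, z = g3 ∈ (b,c)
        refine ⟨g 3, by simp [Ne.symm d03, Ne.symm d13, Ne.symm d23], Or.inl ?_⟩
        rw [phi1, if_neg (by push_neg; exact ⟨(o1.trans o2).le, o3.le⟩),
          if_neg (by push_neg; exact o2.le)]
        rw [← h2']
        ext t; simp; tauto
      · replace hk : ([g 2, g 3, g 0, g 1] : List (Fin n)).Chain' (· < ·) := hk
        simp only [List.Chain', List.isChain_cons_cons, List.isChain_singleton, and_true] at hk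
        obtain ⟨o1, o2, o3⟩ := hk
        obtain ⟨rfl, rfl, rfl⟩ := triple_eq (o1.trans o2) o3 hab hbc (perm3.trans h1)
        -- a = g2, b = g0, c = g1, z = g3 ∈ (a,b)
        refine ⟨g 3, by simp [Ne.symm d03, Ne.symm d13, Ne.symm d23], Or.inl ?_⟩
        rw [phi1, if_neg (by push_neg; exact ⟨o1.le, (o2.trans o3).le⟩), if_pos o2]
        exact h2'.symm
      · replace hk : ([g 3, g 0, g 1, g 2] : List (Fin n)).Chain' (· < ·) := hk
        simp only [List.Chain', List.isChain_cons_cons, List.isChain_singleton, and_true] at hk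
        obtain ⟨o1, o2, o3⟩ := hk
        obtain ⟨rfl, rfl, rfl⟩ := triple_eq o2 o3 hab hbc h1
        -- z = g3 < a = g0
        refine ⟨g 3, by simp [Ne.symm d03, Ne.symm d13, Ne.symm d23], Or.inl ?_⟩
        rw [phi1, if_pos (Or.inl o1)]
        exact h2'.symm
    · -- f = {g0,g1,g2}, e = {g0,g1,g3}, z = g2, phi2
      have h2' : ({g 0, g 1, g 3} : Finset (Fin n)) = {a,b,c} := by
        rcases h2 with h2|h2
        · exact h2
        · exact absurd (h1.trans h2.symm) hI
      interval_cases r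
      · replace hk : ([g 0, g 1, g 2, g 3] : List (Fin n)).Chain' (· < ·) := hk
        simp only [List.Chain', List.isChain_cons_cons, List.isChain_singleton, and_true] at hk
        obtain ⟨o1, o2, o3⟩ := hk
        obtain ⟨rfl, rfl, rfl⟩ := triple_eq o1 (o2.trans o3) hab hbc h2'
        -- a = g0, b = g1, c = g3, z = g2 ∈ (b,c)
        refine ⟨g 2, by simp [Ne.symm d02, Ne.symm d12, d23], Or.inr ?_⟩
        rw [phi2, if_neg (by push_neg; exact ⟨(o1.trans o2).le, o3.le⟩),
          if_neg (by push_neg; exact o2.le)]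
        exact h1.symm
      · replace hk : ([g 1, g 2, g 3, g 0] : List (Fin n)).Chain' (· < ·) := hk
        simp only [List.Chain', List.isChain_cons_cons, List.isChain_singleton, and_true] at hk
        obtain ⟨o1, o2, o3⟩ := hk
        have he : ({g 1, g 3, g 0} : Finset (Fin n)) = {a,b,c} := by
          rw [← h2']; ext t; simp; tauto
        obtain ⟨rfl, rfl, rfl⟩ := triple_eq (o1.trans o2) o3 hab hbc he
        -- a = g1, b = g3, c = g0, z = g2 ∈ (a,b)
        refine ⟨g 2, by simp [Ne.symm d02, Ne.symm d12, d23], Or.inr ?_⟩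
        rw [phi2, if_neg (by push_neg; exact ⟨o1.le, (o2.trans o3).le⟩), if_pos o2]
        rw [← h1]
        ext t; simp; tauto
      · replace hk : ([g 2, g 3, g 0, g 1] : List (Fin n)).Chain' (· < ·) := hk
        simp only [List.Chain', List.isChain_cons_cons, List.isChain_singleton, and_true] at hk
        obtain ⟨o1, o2, o3⟩ := hk
        have he : ({g 3, g 0, g 1} : Finset (Fin n)) = {a,b,c} := by
          rw [← h2']; ext t; simp; tauto
        obtain ⟨rfl, rfl, rfl⟩ := triple_eq o2 o3 hab hbc he
        -- a = g3, b = g0, c = g1, z = g2 < a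
        refine ⟨g 2, by simp [Ne.symm d02, Ne.symm d12, d23], Or.inr ?_⟩
        rw [phi2, if_pos (Or.inl o1)]
        exact h1.symm
      · replace hk : ([g 3, g 0, g 1, g 2] : List (Fin n)).Chain' (· < ·) := hk
        simp only [List.Chain', List.isChain_cons_cons, List.isChain_singleton, and_true] at hk
        obtain ⟨o1, o2, o3⟩ := hk
        have he : ({g 3, g 0, g 1} : Finset (Fin n)) = {a,b,c} := by
          rw [← h2']; ext t; simp; tauto
        obtain ⟨rfl, rfl, rfl⟩ := triple_eq o1 o2 hab hbc he
        -- a = g3, b = g0, c = g1, z = g2 > c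
        refine ⟨g 2, by simp [Ne.symm d02, Ne.symm d12, d23], Or.inr ?_⟩
        rw [phi2, if_pos (Or.inr o3)]
        exact h1.symm
  · rintro ⟨z, hz, hf⟩
    have hz' := hz
    simp only [Finset.mem_insert, Finset.mem_singleton, not_or] at hz'
    obtain ⟨hza, hzb, hzc⟩ := hz'
    have hcard : f.card = 3 := by
      rcases hf with rfl|rfl
      · exact (phi_spec hab hbc hz _ (Or.inr (Or.inl rfl))).2.2
      · exact (phi_spec hab hbc hz _ (Or.inr (Or.inr rfl))).2.2
    refine ⟨hcard, ?_⟩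
    by_cases hc1 : z < a ∨ c < z
    · rcases hf with rfl|rfl
      · have hφ : phi1 a b c z = {a,b,z} := by rw [phi1, if_pos hc1]
        rw [hφ]
        refine copyD2 a b c z hab.ne hac.ne (Ne.symm hza) hbc.ne (Ne.symm hzb) (Ne.symm hzc)
          ?_ (by simp) (by simp)
        rcases hc1 with h|h
        · refine ⟨3, ?_⟩
          show ([z,a,b,c] : List (Fin n)).Chain' (· < ·)
          simp only [List.Chain', List.isChain_cons_cons, List.isChain_singleton, and_true]
          exact ⟨h, hab, hbc⟩
        · refine ⟨0, ?_⟩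
          show ([a,b,c,z] : List (Fin n)).Chain' (· < ·)
          simp only [List.Chain', List.isChain_cons_cons, List.isChain_singleton, and_true]
          exact ⟨hab, hbc, h⟩
      · have hφ : phi2 a b c z = {b,c,z} := by rw [phi2, if_pos hc1]
        rw [hφ]
        refine copyD2 b c z a hbc.ne (Ne.symm hzb) (Ne.symm hab.ne) (Ne.symm hzc)
          (Ne.symm hac.ne) hza ?_ ?_ ?_
        · rcases hc1 with h|h
          · refine ⟨2, ?_⟩
            show ([z,a,b,c] : List (Fin n)).Chain' (· < ·)
            simp only [List.Chain', List.isChain_cons_cons, List.isChain_singleton, and_true]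
            exact ⟨h, hab, hbc⟩
          · refine ⟨3, ?_⟩
            show ([a,b,c,z] : List (Fin n)).Chain' (· < ·)
            simp only [List.Chain', List.isChain_cons_cons, List.isChain_singleton, and_true]
            exact ⟨hab, hbc, h⟩
        · show ({b,c,z} : Finset (Fin n)) ∈ _
          simp
        · show ({b,c,a} : Finset (Fin n)) ∈ _
          have : ({b,c,a} : Finset (Fin n)) = {a,b,c} := by ext t; simp; tauto
          rw [this]; simp
    · push_neg at hc1
      obtain ⟨haz, hzc2⟩ := hc1
      have haz' : a < z := lt_of_le_of_ne haz (Ne.symm hza)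
      have hzc' : z < c := lt_of_le_of_ne hzc2 hzc
      by_cases hc2 : z < b
      · rcases hf with rfl|rfl
        · have hφ : phi1 a b c z = {b,c,z} := by
            rw [phi1, if_neg (by push_neg; exact ⟨haz, hzc2⟩), if_pos hc2]
          rw [hφ]
          refine copyD2 b c a z hbc.ne (Ne.symm hab.ne) (fun h => hzb h.symm)
            (Ne.symm hac.ne) (Ne.symm hzc) (fun h => hza h.symm) ?_ ?_ ?_
          · refine ⟨2, ?_⟩
            show ([a,z,b,c] : List (Fin n)).Chain' (· < ·)
            simp only [List.Chain', List.isChain_cons_cons, List.isChain_singleton, and_true]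
            exact ⟨haz', hc2, hbc⟩
          · show ({b,c,a} : Finset (Fin n)) ∈ _
            have : ({b,c,a} : Finset (Fin n)) = {a,b,c} := by ext t; simp; tauto
            rw [this]; simp
          · show ({b,c,z} : Finset (Fin n)) ∈ _
            simp
        · have hφ : phi2 a b c z = {a,c,z} := by
            rw [phi2, if_neg (by push_neg; exact ⟨haz, hzc2⟩), if_pos hc2]
          rw [hφ]
          refine copyD2 c a z b (Ne.symm hac.ne) (Ne.symm hzc) (Ne.symm hbc.ne)
            (fun h => hza h.symm) hab.ne hzb ?_ ?_ ?_
          · refine ⟨1, ?_⟩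
            show ([a,z,b,c] : List (Fin n)).Chain' (· < ·)
            simp only [List.Chain', List.isChain_cons_cons, List.isChain_singleton, and_true]
            exact ⟨haz', hc2, hbc⟩
          · show ({c,a,z} : Finset (Fin n)) ∈ _
            have : ({c,a,z} : Finset (Fin n)) = {a,c,z} := by ext t; simp; tauto
            rw [this]; simp
          · show ({c,a,b} : Finset (Fin n)) ∈ _
            have : ({c,a,b} : Finset (Fin n)) = {a,b,c} := by ext t; simp; tauto
            rw [this]; simp
      · push_neg at hc2
        have hbz : b < z := lt_of_le_of_ne hc2 (Ne.symm hzb)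
        rcases hf with rfl|rfl
        · have hφ : phi1 a b c z = {a,c,z} := by
            rw [phi1, if_neg (by push_neg; exact ⟨haz, hzc2⟩), if_neg (not_lt.mpr hc2)]
          rw [hφ]
          refine copyD2 c a b z (Ne.symm hac.ne) (Ne.symm hbc.ne) (Ne.symm hzc)
            hab.ne (fun h => hza h.symm) (fun h => hzb h.symm) ?_ ?_ ?_
          · refine ⟨1, ?_⟩
            show ([a,b,z,c] : List (Fin n)).Chain' (· < ·)
            simp only [List.Chain', List.isChain_cons_cons, List.isChain_singleton, and_true]
            exact ⟨hab, hbz, hzc'⟩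
          · show ({c,a,b} : Finset (Fin n)) ∈ _
            have : ({c,a,b} : Finset (Fin n)) = {a,b,c} := by ext t; simp; tauto
            rw [this]; simp
          · show ({c,a,z} : Finset (Fin n)) ∈ _
            have : ({c,a,z} : Finset (Fin n)) = {a,c,z} := by ext t; simp; tauto
            rw [this]; simp
        · have hφ : phi2 a b c z = {a,b,z} := by
            rw [phi2, if_neg (by push_neg; exact ⟨haz, hzc2⟩), if_neg (not_lt.mpr hc2)]
          rw [hφ]
          refine copyD2 a b z c hab.ne (Ne.symm hza) hac.ne (Ne.symm hzb)
            hbc.ne hzc ?_ ?_ ?_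
          · refine ⟨0, ?_⟩
            show ([a,b,z,c] : List (Fin n)).Chain' (· < ·)
            simp only [List.Chain', List.isChain_cons_cons, List.isChain_singleton, and_true]
            exact ⟨hab, hbz, hzc'⟩
          · show ({a,b,z} : Finset (Fin n)) ∈ _
            simp
          · show ({a,b,c} : Finset (Fin n)) ∈ _
            simp

noncomputable def Tset (F : CGH) {n : ℕ} (e : Finset (Fin n)) : Finset (Finset (Fin n)) :=
  @Finset.filter _ (fun f => HasCopy F ({e, f} : Finset (Finset (Fin n))))
    (fun _ => Classical.propDecidable _) (Finset.powersetCard 3 Finset.univ)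

lemma mem_Tset {F : CGH} {e f : Finset (Fin n)} :
    f ∈ Tset F e ↔ f.card = 3 ∧ HasCopy F ({e, f} : Finset (Finset (Fin n))) := by
  classical
  rw [Tset, Finset.mem_filter, Finset.mem_powersetCard_univ]

lemma ncard_eq_Tset (F : CGH) (e : Finset (Fin n)) :
    {f : Finset (Fin n) | f.card = 3 ∧ HasCopy F ({e, f} : Finset (Finset (Fin n)))}.ncard
      = (Tset F e).card := by
  have h : {f : Finset (Fin n) | f.card = 3 ∧ HasCopy F ({e, f} : Finset (Finset (Fin n)))}
      = ↑(Tset F e) := by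
    ext f; simp [mem_Tset]
  rw [h, Set.ncard_coe_finset]

lemma Tset_D1_card {e : Finset (Fin n)} (he : e.card = 3) :
    (Tset D1cgh e).card = n - 3 := by
  obtain ⟨a, b, c, hab, hbc, rfl⟩ := card_eq_three_sorted he
  have himg : Tset D1cgh {a,b,c} = (Finset.univ \ {a,b,c}).image (phiD1 a b c) := by
    ext f
    rw [mem_Tset, hasCopy_D1_iff hab hbc f]
    simp only [Finset.mem_image, Finset.mem_sdiff, Finset.mem_univ, true_and]
    constructor
    · rintro ⟨z, hz, rfl⟩; exact ⟨z, hz, rfl⟩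
    · rintro ⟨z, hz, rfl⟩; exact ⟨z, hz, rfl⟩
  rw [himg, Finset.card_image_of_injOn ?_, Finset.card_sdiff_of_subset (Finset.subset_univ _),
    Finset.card_univ, Fintype.card_fin, card3 hab.ne (hab.trans hbc).ne hbc.ne]
  intro z hz z' hz' hphi
  simp only [Finset.coe_sdiff, Set.mem_diff, Finset.mem_coe, Finset.coe_univ, Set.mem_univ,
    true_and] at hz hz'
  have h1 := (phi_spec hab hbc hz' _ (Or.inl rfl)).1
  rw [← hphi] at h1
  have h2 := (phi_spec hab hbc hz _ (Or.inl rfl)).2.1 h1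
  rw [Finset.mem_insert] at h2
  rcases h2 with h|h
  · exact h.symm
  · exact absurd h hz'

lemma Tset_D2_card {e : Finset (Fin n)} (he : e.card = 3) :
    (Tset D2cgh e).card = 2 * (n - 3) := by
  obtain ⟨a, b, c, hab, hbc, rfl⟩ := card_eq_three_sorted he
  have hac : a < c := hab.trans hbc
  have hne12 : ∀ z : Fin n, z ∉ ({a,b,c} : Finset (Fin n)) → phi1 a b c z ≠ phi2 a b c z := by
    intro z hz
    simp only [Finset.mem_insert, Finset.mem_singleton, not_or] at hz
    obtain ⟨hza, hzb, hzc⟩ := hz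
    simp only [phi1, phi2]
    split_ifs with h1 h2
    · intro h
      have hmem : c ∈ ({a,b,z} : Finset (Fin n)) := by rw [h]; simp
      simp only [Finset.mem_insert, Finset.mem_singleton] at hmem
      rcases hmem with h'|h'|h'
      exacts [absurd h'.symm hac.ne, absurd h'.symm hbc.ne, absurd h'.symm hzc]
    · intro h
      have hmem : a ∈ ({b,c,z} : Finset (Fin n)) := by rw [h]; simp
      simp only [Finset.mem_insert, Finset.mem_singleton] at hmem
      rcases hmem with h'|h'|h'
      exacts [absurd h' hab.ne, absurd h' hac.ne, absurd h'.symm hza]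
    · intro h
      have hmem : c ∈ ({a,b,z} : Finset (Fin n)) := by rw [← h]; simp
      simp only [Finset.mem_insert, Finset.mem_singleton] at hmem
      rcases hmem with h'|h'|h'
      exacts [absurd h'.symm hac.ne, absurd h'.symm hbc.ne, absurd h'.symm hzc]
  have himg : Tset D2cgh {a,b,c} =
      (Finset.univ \ {a,b,c}).image (phi1 a b c) ∪ (Finset.univ \ {a,b,c}).image (phi2 a b c) := by
    ext f
    rw [mem_Tset, hasCopy_D2_iff hab hbc f]
    simp only [Finset.mem_union, Finset.mem_image, Finset.mem_sdiff, Finset.mem_univ, true_and]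
    constructor
    · rintro ⟨z, hz, h|h⟩
      exacts [Or.inl ⟨z, hz, h.symm⟩, Or.inr ⟨z, hz, h.symm⟩]
    · rintro (⟨z, hz, h⟩|⟨z, hz, h⟩)
      exacts [⟨z, hz, Or.inl h.symm⟩, ⟨z, hz, Or.inr h.symm⟩]
  have hinj1 : Set.InjOn (phi1 a b c) ↑(Finset.univ \ ({a,b,c} : Finset (Fin n))) := by
    intro z hz z' hz' hphi
    simp only [Finset.coe_sdiff, Set.mem_diff, Finset.mem_coe, Finset.coe_univ, Set.mem_univ,
      true_and] at hz hz'
    have h1 := (phi_spec hab hbc hz' _ (Or.inr (Or.inl rfl))).1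
    rw [← hphi] at h1
    have h2 := (phi_spec hab hbc hz _ (Or.inr (Or.inl rfl))).2.1 h1
    rw [Finset.mem_insert] at h2
    rcases h2 with h|h
    · exact h.symm
    · exact absurd h hz'
  have hinj2 : Set.InjOn (phi2 a b c) ↑(Finset.univ \ ({a,b,c} : Finset (Fin n))) := by
    intro z hz z' hz' hphi
    simp only [Finset.coe_sdiff, Set.mem_diff, Finset.mem_coe, Finset.coe_univ, Set.mem_univ,
      true_and] at hz hz'
    have h1 := (phi_spec hab hbc hz' _ (Or.inr (Or.inr rfl))).1
    rw [← hphi] at h1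
    have h2 := (phi_spec hab hbc hz _ (Or.inr (Or.inr rfl))).2.1 h1
    rw [Finset.mem_insert] at h2
    rcases h2 with h|h
    · exact h.symm
    · exact absurd h hz'
  have hdisj : Disjoint ((Finset.univ \ ({a,b,c} : Finset (Fin n))).image (phi1 a b c))
      ((Finset.univ \ ({a,b,c} : Finset (Fin n))).image (phi2 a b c)) := by
    rw [Finset.disjoint_left]
    rintro f hf1 hf2
    obtain ⟨z, hz, rfl⟩ := Finset.mem_image.1 hf1
    obtain ⟨z', hz', heq⟩ := Finset.mem_image.1 hf2
    simp only [Finset.mem_sdiff, Finset.mem_univ, true_and] at hz hz'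
    have h1 := (phi_spec hab hbc hz' _ (Or.inr (Or.inr rfl))).1
    rw [heq] at h1
    have h2 := (phi_spec hab hbc hz _ (Or.inr (Or.inl rfl))).2.1 h1
    rw [Finset.mem_insert] at h2
    have hzz : z' = z := by
      rcases h2 with h|h
      · exact h
      · exact absurd h hz'
    subst hzz
    exact hne12 z' hz heq.symm
  rw [himg, Finset.card_union_of_disjoint hdisj, Finset.card_image_of_injOn hinj1,
    Finset.card_image_of_injOn hinj2, Finset.card_sdiff_of_subset (Finset.subset_univ _),
    Finset.card_univ, Fintype.card_fin, card3 hab.ne hac.ne hbc.ne, two_mul]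

lemma exists_isSat (F : CGH) (hF : F.edges.Nonempty) :
    ∃ H : Finset (Finset (Fin n)), IsSat F 3 H := by
  classical
  have hfree : ¬ HasCopy F (∅ : Finset (Finset (Fin n))) := by
    rintro ⟨g, -, -, him⟩
    exact absurd (him _ hF.choose_spec) (by simp)
  obtain ⟨H, hHmem, hmax⟩ := Finset.exists_max_image
    (((Finset.powersetCard 3 (Finset.univ : Finset (Fin n))).powerset).filter
      (fun H => ¬ HasCopy F H)) Finset.card
    ⟨∅, by simp only [Finset.mem_filter, Finset.mem_powerset]; exact ⟨Finset.empty_subset _, hfree⟩⟩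
  simp only [Finset.mem_filter, Finset.mem_powerset] at hHmem
  obtain ⟨hsub, hHfree⟩ := hHmem
  refine ⟨H, fun h hh => Finset.mem_powersetCard_univ.1 (hsub hh), hHfree, ?_⟩
  intro e he heH
  by_contra hno
  have hmem : insert e H ∈ (((Finset.powersetCard 3 (Finset.univ : Finset (Fin n))).powerset).filter
      (fun H => ¬ HasCopy F H)) := by
    simp only [Finset.mem_filter, Finset.mem_powerset]
    exact ⟨Finset.insert_subset (Finset.mem_powersetCard_univ.2 he) hsub, hno⟩
  have := hmax _ hmem
  rw [Finset.card_insert_of_notMem heH] at this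
  omega

lemma sat_count (F : CGH) (ε1 ε2 : Finset (Fin F.m)) (hFe : F.edges = {ε1, ε2}) (hne : ε1 ≠ ε2)
    (cnt : ℕ) (hcnt : ∀ e : Finset (Fin n), e.card = 3 → (Tset F e).card = cnt)
    (H : Finset (Finset (Fin n))) (hH : IsSat F 3 H) :
    (Finset.powersetCard 3 (Finset.univ : Finset (Fin n))).card ≤ H.card * (cnt + 1) := by
  classical
  have key : Finset.powersetCard 3 (Finset.univ : Finset (Fin n)) ⊆
      H.biUnion (fun h => insert h (Tset F h)) := by
    intro e he'
    have hec : e.card = 3 := Finset.mem_powersetCard_univ.1 he'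
    by_cases heH : e ∈ H
    · exact Finset.mem_biUnion.2 ⟨e, heH, Finset.mem_insert_self _ _⟩
    · obtain ⟨g, hinj, hcyc, him⟩ := hH.2.2 e hec heH
      have h1 := him ε1 (by rw [hFe]; simp)
      have h2 := him ε2 (by rw [hFe]; simp)
      have himne : ε1.image g ≠ ε2.image g := fun h => hne (Finset.image_injective hinj h)
      rcases Finset.mem_insert.1 h1 with e1|e1
      · rcases Finset.mem_insert.1 h2 with e2|e2
        · exact absurd (e1.trans e2.symm) himne
        · refine Finset.mem_biUnion.2 ⟨ε2.image g, e2, Finset.mem_insert_of_mem ?_⟩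
          refine mem_Tset.2 ⟨hec, g, hinj, hcyc, ?_⟩
          intro ε hε
          rw [hFe] at hε
          rcases Finset.mem_insert.1 hε with rfl|hε
          · rw [e1]; simp
          · rw [Finset.mem_singleton.1 hε]; simp
      · rcases Finset.mem_insert.1 h2 with e2|e2
        · refine Finset.mem_biUnion.2 ⟨ε1.image g, e1, Finset.mem_insert_of_mem ?_⟩
          refine mem_Tset.2 ⟨hec, g, hinj, hcyc, ?_⟩
          intro ε hε
          rw [hFe] at hε
          rcases Finset.mem_insert.1 hε with rfl|hε
          · simp
          · rw [Finset.mem_singleton.1 hε, e2]; simp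
        · exact absurd ⟨g, hinj, hcyc, fun ε hε => by
            rw [hFe] at hε
            rcases Finset.mem_insert.1 hε with rfl|hε
            · exact e1
            · rw [Finset.mem_singleton.1 hε]; exact e2⟩ hH.2.1
  calc (Finset.powersetCard 3 (Finset.univ : Finset (Fin n))).card
      ≤ (H.biUnion (fun h => insert h (Tset F h))).card := Finset.card_le_card key
    _ ≤ ∑ h ∈ H, (insert h (Tset F h)).card := Finset.card_biUnion_le
    _ ≤ ∑ _h ∈ H, (cnt + 1) := by
        refine Finset.sum_le_sum ?_
        intro h hh
        calc (insert h (Tset F h)).card ≤ (Tset F h).card + 1 := Finset.card_insert_le _ _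
          _ = cnt + 1 := by rw [hcnt h (hH.1 h hh)]
    _ = H.card * (cnt + 1) := by rw [Finset.sum_const, smul_eq_mul]

lemma satNum_count (F : CGH) (ε1 ε2 : Finset (Fin F.m)) (hFe : F.edges = {ε1, ε2}) (hne : ε1 ≠ ε2)
    (cnt : ℕ) (hcnt : ∀ e : Finset (Fin n), e.card = 3 → (Tset F e).card = cnt) :
    n.choose 3 ≤ satNum F 3 n * (cnt + 1) := by
  obtain ⟨H0, h0⟩ := exists_isSat (n := n) F (by rw [hFe]; exact ⟨ε1, by simp⟩)
  have hSne : {k | ∃ H : Finset (Finset (Fin n)), IsSat F 3 H ∧ H.card = k}.Nonempty :=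
    ⟨H0.card, H0, h0, rfl⟩
  obtain ⟨H, hH, hcard⟩ := Nat.sInf_mem hSne
  have := sat_count F ε1 ε2 hFe hne cnt hcnt H hH
  rw [Finset.card_powersetCard, Finset.card_univ, Fintype.card_fin] at this
  rw [satNum, ← hcard]
  exact this


end AuxSat

-- STATEMENT 10
theorem sat_D1_D2_lower (n : ℕ) (hn : 5 ≤ n) :
    (∀ e : Finset (Fin n), e.card = 3 →
      {f : Finset (Fin n) | f.card = 3 ∧ HasCopy D1cgh ({e, f} : Finset (Finset (Fin n)))}.ncard
          = n - 3 ∧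
      {f : Finset (Fin n) | f.card = 3 ∧ HasCopy D2cgh ({e, f} : Finset (Finset (Fin n)))}.ncard
          = 2 * (n - 3)) ∧
    ((n * (n - 1) : ℕ) : ℝ) / 6 ≤ (satNum D1cgh 3 n : ℝ) ∧
    ((n * (n - 1) * (n - 2) : ℕ) : ℝ) / (6 * (2 * n - 5 : ℕ)) ≤ (satNum D2cgh 3 n : ℝ) := by
  have hchoose : 6 * n.choose 3 = n * (n - 1) * (n - 2) := by
    have h := (Nat.descFactorial_eq_factorial_mul_choose n 3).symm
    rw [show Nat.factorial 3 = 6 from rfl] at h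
    rw [h]; simp [Nat.descFactorial]; ring
  refine ⟨fun e he => ⟨by rw [ncard_eq_Tset]; exact Tset_D1_card he,
    by rw [ncard_eq_Tset]; exact Tset_D2_card he⟩, ?_, ?_⟩
  · have hb := satNum_count (n := n) D1cgh ({0,1,2} : Finset (Fin 4)) ({0,2,3} : Finset (Fin 4))
      rfl (by decide : ({0,1,2} : Finset (Fin 4)) ≠ {0,2,3}) (n - 3) (fun e he => Tset_D1_card he)
    set S := satNum D1cgh 3 n with hS
    have h2 : n * (n-1) * (n-2) ≤ 6 * S * (n - 2) := by
      calc n * (n-1) * (n-2) = 6 * n.choose 3 := hchoose.symm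
        _ ≤ 6 * (S * (n - 3 + 1)) := Nat.mul_le_mul_left 6 hb
        _ = 6 * S * (n-2) := by rw [show n - 3 + 1 = n - 2 by omega]; ring
    have h3 : n * (n-1) ≤ 6 * S := Nat.le_of_mul_le_mul_right h2 (by omega)
    rw [div_le_iff₀ (by norm_num : (0:ℝ) < 6)]
    calc ((n * (n-1) : ℕ) : ℝ) ≤ ((6 * S : ℕ) : ℝ) := by exact_mod_cast h3
      _ = (S : ℝ) * 6 := by push_cast; ring
  · have hb := satNum_count (n := n) D2cgh ({0,1,2} : Finset (Fin 4)) ({0,1,3} : Finset (Fin 4))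
      rfl (by decide : ({0,1,2} : Finset (Fin 4)) ≠ {0,1,3}) (2 * (n - 3)) (fun e he => Tset_D2_card he)
    set S := satNum D2cgh 3 n with hS
    have h2 : n * (n-1) * (n-2) ≤ S * (6 * (2*n-5)) := by
      calc n * (n-1) * (n-2) = 6 * n.choose 3 := hchoose.symm
        _ ≤ 6 * (S * (2 * (n-3) + 1)) := Nat.mul_le_mul_left 6 hb
        _ = S * (6 * (2*n-5)) := by rw [show 2 * (n - 3) + 1 = 2*n-5 by omega]; ring
    have hden : (0:ℝ) < 6 * ((2*n-5 : ℕ) : ℝ) := by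
      have h5 : (0:ℕ) < 2*n-5 := by omega
      have h6 : (0:ℝ) < ((2*n-5 : ℕ) : ℝ) := by exact_mod_cast h5
      linarith
    rw [div_le_iff₀ hden]
    calc ((n * (n-1) * (n-2) : ℕ) : ℝ) ≤ ((S * (6 * (2*n-5)) : ℕ) : ℝ) := by exact_mod_cast h2
      _ = (S : ℝ) * (6 * ((2*n-5 : ℕ) : ℝ)) := by push_cast; ring
end
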